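/- arXiv:2512.19071 — 8 statements merged into one kernel-verified Lean document; each statement's English description precedes it below -/
import Mathlib

section
/- For every even integer f ≥ 10, the quadruple (α, β, γ, δ) = (4π/f, (f−4)π/f, 4π/f, π) is a good rational quadruple for f, satisfies α + β + δ = 2π and γ = 4π/f, and satisfies equation (E). -/
open Real

/-- Equation (E): `sin(α − γ/2) · sin(β/2) = sin(γ/2) · sin(δ − β/2)`. -/
def eqE (α β γ δ : ℝ) : Prop :=
  Real.sin (α - γ / 2) * Real.sin (β / 2) = Real.sin (γ / 2) * Real.sin (δ - β / 2)

/-- `(α, β, γ, δ)` is a good rational quadruple for the even integer `f ≥ 6`. -/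
def goodQuad (f : ℤ) (α β γ δ : ℝ) : Prop :=
  Even f ∧ 6 ≤ f ∧
  (∃ q : ℚ, α = q * π) ∧ (∃ q : ℚ, β = q * π) ∧
  (∃ q : ℚ, γ = q * π) ∧ (∃ q : ℚ, δ = q * π) ∧
  α ∈ Set.Ioo 0 (2 * π) ∧ β ∈ Set.Ioo 0 (2 * π) ∧
  γ ∈ Set.Ioo 0 (2 * π) ∧ δ ∈ Set.Ioo 0 (2 * π) ∧
  α + β + γ + δ = 2 * π + 4 * π / (f : ℝ) ∧
  α ≠ δ ∧ β ≠ γ ∧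
  ¬(π ≤ α ∧ π ≤ β) ∧ ¬(π ≤ α ∧ π ≤ γ) ∧ ¬(π ≤ α ∧ π ≤ δ) ∧
  ¬(π ≤ β ∧ π ≤ γ) ∧ ¬(π ≤ β ∧ π ≤ δ) ∧ ¬(π ≤ γ ∧ π ≤ δ) ∧
  (β < γ ↔ δ < α) ∧ (β = δ ↔ α = π) ∧
  (δ ≤ π → π < 2 * α + β ∧ π < β + 2 * γ) ∧
  ((α < π ∧ β < π ∧ γ < π ∧ δ < π) →
    (δ < β ↔ α < γ) ∧ α + δ < π + β ∧ α + δ < π + γ ∧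
    α + β < π + δ ∧ γ + δ < π + α)

theorem stmt_1 (f : ℤ) (hf : Even f) (hf10 : 10 ≤ f) :
    goodQuad f (4 * π / (f : ℝ)) (((f : ℝ) - 4) * π / (f : ℝ)) (4 * π / (f : ℝ)) π ∧
    4 * π / (f : ℝ) + ((f : ℝ) - 4) * π / (f : ℝ) + π = 2 * π ∧
    (4 * π / (f : ℝ)) = 4 * π / (f : ℝ) ∧
    eqE (4 * π / (f : ℝ)) (((f : ℝ) - 4) * π / (f : ℝ)) (4 * π / (f : ℝ)) π := by
  have hfR : (10 : ℝ) ≤ (f : ℝ) := by exact_mod_cast hf10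
  have hfpos : (0 : ℝ) < (f : ℝ) := by linarith
  have hfne : (f : ℝ) ≠ 0 := ne_of_gt hfpos
  have hpi := Real.pi_pos
  have ha0 : 0 < 4 * π / (f : ℝ) := by positivity
  have ha : 4 * π / (f : ℝ) ≤ 2 * π / 5 := by
    rw [div_le_div_iff₀ hfpos (by norm_num)]
    nlinarith
  have hβ : ((f : ℝ) - 4) * π / (f : ℝ) = π - 4 * π / (f : ℝ) := by
    field_simp
  have hqf : (f : ℚ) ≠ 0 := by
    exact_mod_cast (ne_of_gt (by exact_mod_cast hfpos : (0:ℚ) < (f:ℚ)))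
  refine ⟨⟨hf, by linarith, ⟨4 / (f : ℚ), ?_⟩, ⟨((f : ℚ) - 4) / (f : ℚ), ?_⟩,
    ⟨4 / (f : ℚ), ?_⟩, ⟨1, by norm_num⟩, ⟨ha0, by nlinarith⟩,
    ⟨by rw [hβ]; nlinarith, by rw [hβ]; nlinarith⟩,
    ⟨ha0, by nlinarith⟩, ⟨hpi, by nlinarith⟩, by rw [hβ]; ring,
    by nlinarith, by rw [hβ]; intro h; nlinarith,
    fun h => by nlinarith [h.1, h.2], fun h => by nlinarith [h.1],
    fun h => by nlinarith [h.1], fun h => by rw [hβ] at h; nlinarith [h.1, h.2],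
    fun h => by rw [hβ] at h; nlinarith [h.1],
    fun h => by nlinarith [h.1],
    ⟨fun h => by rw [hβ] at h; nlinarith, fun h => by nlinarith⟩,
    ⟨fun h => by rw [hβ] at h; nlinarith, fun h => by nlinarith⟩,
    fun _ => ⟨by rw [hβ]; nlinarith, by rw [hβ]; nlinarith⟩,
    fun h => absurd h.2.2.2 (lt_irrefl π)⟩, by rw [hβ]; ring, rfl, ?_⟩
  · push_cast; field_simp
  · push_cast; field_simp
  · push_cast; field_simp
  · unfold eqE
    rw [hβ]
    have h1 : π - (π - 4 * π / (f : ℝ)) / 2 = π - ((π - 4 * π / (f : ℝ)) / 2) := rfl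
    rw [h1, Real.sin_pi_sub]
    ring_nf
end

section
/- For every even integer f ≥ 6, the quadruple (α, β, γ, δ) = (2π/f, (4f−4)π/(3f), 4π/f, (2f−2)π/(3f)) is a good rational quadruple for f, satisfies α + β + δ = 2π and γ = 4π/f, and satisfies equation (E). -/
open Real

theorem stmt_2 (f : ℤ) (hf : Even f) (hf6 : 6 ≤ f) :
    goodQuad f (2 * π / (f : ℝ)) ((4 * (f : ℝ) - 4) * π / (3 * (f : ℝ)))
      (4 * π / (f : ℝ)) ((2 * (f : ℝ) - 2) * π / (3 * (f : ℝ))) ∧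
    2 * π / (f : ℝ) + (4 * (f : ℝ) - 4) * π / (3 * (f : ℝ)) +
      (2 * (f : ℝ) - 2) * π / (3 * (f : ℝ)) = 2 * π ∧
    (4 * π / (f : ℝ)) = 4 * π / (f : ℝ) ∧
    eqE (2 * π / (f : ℝ)) ((4 * (f : ℝ) - 4) * π / (3 * (f : ℝ)))
      (4 * π / (f : ℝ)) ((2 * (f : ℝ) - 2) * π / (3 * (f : ℝ))) := by

  have hF6 : (6:ℝ) ≤ (f:ℝ) := by exact_mod_cast hf6
  have hF0 : (0:ℝ) < (f:ℝ) := by linarith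
  have hfne : (f:ℝ) ≠ 0 := ne_of_gt hF0
  have h3f : (0:ℝ) < 3 * (f:ℝ) := by linarith
  have hpi := Real.pi_pos
  have hfq : ((f:ℚ):ℝ) = (f:ℝ) := by push_cast; ring
  have hα : 2 * π / (f:ℝ) < π := by rw [div_lt_iff₀ hF0]; nlinarith
  have hγ : 4 * π / (f:ℝ) < π := by rw [div_lt_iff₀ hF0]; nlinarith
  have hδ : (2 * (f:ℝ) - 2) * π / (3 * (f:ℝ)) < π := by
    rw [div_lt_iff₀ h3f]; nlinarith
  have hβ : π < (4 * (f:ℝ) - 4) * π / (3 * (f:ℝ)) := by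
    rw [lt_div_iff₀ h3f]; nlinarith
  have hαδ : 2 * π / (f:ℝ) < (2 * (f:ℝ) - 2) * π / (3 * (f:ℝ)) := by
    rw [div_lt_div_iff₀ hF0 h3f]
    nlinarith [mul_pos hpi hF0, mul_nonneg (mul_pos hpi hF0).le (by linarith : (0:ℝ) ≤ (f:ℝ) - 6)]
  have hγβ : 4 * π / (f:ℝ) < (4 * (f:ℝ) - 4) * π / (3 * (f:ℝ)) := by
    rw [div_lt_div_iff₀ hF0 h3f]
    nlinarith [mul_pos hpi hF0, mul_nonneg (mul_pos hpi hF0).le (by linarith : (0:ℝ) ≤ (f:ℝ) - 6)]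
  refine ⟨⟨hf, hf6, ⟨2/(f:ℚ), ?_⟩, ⟨(4*(f:ℚ)-4)/(3*(f:ℚ)), ?_⟩,
    ⟨4/(f:ℚ), ?_⟩, ⟨(2*(f:ℚ)-2)/(3*(f:ℚ)), ?_⟩,
    ⟨by positivity, by linarith⟩, ⟨?_, ?_⟩,
    ⟨by positivity, by linarith⟩, ⟨?_, by linarith⟩,
    ?_, ne_of_lt hαδ, ne_of_gt hγβ,
    fun h => absurd h.1 (not_le.2 hα),
    fun h => absurd h.1 (not_le.2 hα),
    fun h => absurd h.1 (not_le.2 hα),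
    fun h => absurd h.2 (not_le.2 hγ),
    fun h => absurd h.2 (not_le.2 hδ),
    fun h => absurd h.1 (not_le.2 hγ),
    ⟨fun h => absurd h (not_lt.2 hγβ.le), fun h => absurd h (not_lt.2 hαδ.le)⟩,
    ⟨fun h => absurd h (lt_trans hδ hβ).ne', fun h => absurd h hα.ne⟩,
    fun _ => ⟨?_, ?_⟩,
    fun h => absurd h.2.1 (not_lt.2 hβ.le)⟩, ?_, rfl, ?_⟩
  · push_cast; ring
  · push_cast; ring
  · push_cast; ring
  · push_cast; ring
  · apply div_pos; nlinarith; exact h3f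
  · rw [div_lt_iff₀ h3f]; nlinarith [mul_pos hpi hF0]
  · apply div_pos; nlinarith; exact h3f
  · field_simp; ring
  · have key : 2 * (2 * π / (f:ℝ)) + (4 * (f:ℝ) - 4) * π / (3 * (f:ℝ))
        = (4 * (f:ℝ) + 8) * π / (3 * (f:ℝ)) := by field_simp; ring
    rw [key, lt_div_iff₀ h3f]; nlinarith
  · have key : (4 * (f:ℝ) - 4) * π / (3 * (f:ℝ)) + 2 * (4 * π / (f:ℝ))
        = (4 * (f:ℝ) + 20) * π / (3 * (f:ℝ)) := by field_simp; ring
    rw [key, lt_div_iff₀ h3f]; nlinarith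
  · field_simp; ring
  · unfold eqE
    have h1 : 2 * π / (f:ℝ) - (4 * π / (f:ℝ)) / 2 = 0 := by ring
    have h2 : (2 * (f:ℝ) - 2) * π / (3 * (f:ℝ))
        - ((4 * (f:ℝ) - 4) * π / (3 * (f:ℝ))) / 2 = 0 := by ring
    rw [h1, h2, Real.sin_zero]; ring
end

section
/- For every even integer f ≥ 10, the quadruple (α, β, γ, δ) = (2π/f, (2f−4)π/(3f), 4π/f, (4f−2)π/(3f)) is a good rational quadruple for f, satisfies α + β + δ = 2π and γ = 4π/f, and satisfies equation (E). -/
open Real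

theorem stmt_3 (f : ℤ) (hf : Even f) (hf10 : 10 ≤ f) :
    goodQuad f (2 * π / (f : ℝ)) ((2 * (f : ℝ) - 4) * π / (3 * (f : ℝ)))
      (4 * π / (f : ℝ)) ((4 * (f : ℝ) - 2) * π / (3 * (f : ℝ))) ∧
    2 * π / (f : ℝ) + (2 * (f : ℝ) - 4) * π / (3 * (f : ℝ)) +
      (4 * (f : ℝ) - 2) * π / (3 * (f : ℝ)) = 2 * π ∧
    (4 * π / (f : ℝ)) = 4 * π / (f : ℝ) ∧
    eqE (2 * π / (f : ℝ)) ((2 * (f : ℝ) - 4) * π / (3 * (f : ℝ)))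
      (4 * π / (f : ℝ)) ((4 * (f : ℝ) - 2) * π / (3 * (f : ℝ))) := by
  have hx : (10:ℝ) ≤ (f:ℝ) := by exact_mod_cast hf10
  have hx0 : (0:ℝ) < (f:ℝ) := by linarith
  have hπ := Real.pi_pos
  have hαπ : 2 * π / (f : ℝ) < π := by
    rw [div_lt_iff₀ hx0]; nlinarith
  have hβπ : (2 * (f : ℝ) - 4) * π / (3 * (f : ℝ)) < π := by
    rw [div_lt_iff₀ (by linarith)]; nlinarith
  have hγπ : 4 * π / (f : ℝ) < π := by
    rw [div_lt_iff₀ hx0]; nlinarith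
  have hπδ : π < (4 * (f : ℝ) - 2) * π / (3 * (f : ℝ)) := by
    rw [lt_div_iff₀ (by linarith)]; nlinarith
  have hαδ : 2 * π / (f : ℝ) < (4 * (f : ℝ) - 2) * π / (3 * (f : ℝ)) := by linarith
  have hγβ : 4 * π / (f : ℝ) < (2 * (f : ℝ) - 4) * π / (3 * (f : ℝ)) := by
    rw [div_lt_div_iff₀ hx0 (by linarith)]
    nlinarith [mul_pos (mul_pos hπ hx0) (show (0:ℝ) < 2 * (f:ℝ) - 16 by linarith)]
  refine ⟨⟨hf, by linarith, ⟨2 / f, by push_cast; ring⟩,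
    ⟨(2 * f - 4) / (3 * f), by push_cast; ring⟩,
    ⟨4 / f, by push_cast; ring⟩,
    ⟨(4 * f - 2) / (3 * f), by push_cast; ring⟩,
    ⟨by positivity, by linarith⟩,
    ⟨by apply div_pos; nlinarith; linarith, by linarith⟩,
    ⟨by positivity, by linarith⟩,
    ⟨by apply div_pos; nlinarith; linarith, ?_⟩,
    by field_simp; ring,
    ne_of_lt hαδ, ne_of_gt hγβ,
    fun h => absurd h.1 (not_le.2 hαπ),
    fun h => absurd h.1 (not_le.2 hαπ),
    fun h => absurd h.1 (not_le.2 hαπ),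
    fun h => absurd h.1 (not_le.2 hβπ),
    fun h => absurd h.1 (not_le.2 hβπ),
    fun h => absurd h.1 (not_le.2 hγπ),
    iff_of_false (not_lt.2 hγβ.le) (not_lt.2 hαδ.le),
    iff_of_false ?_ (ne_of_lt hαπ),
    fun h => absurd h (not_le.2 hπδ),
    fun h => absurd h.2.2.2 (not_lt.2 hπδ.le)⟩,
    by field_simp; ring, rfl, ?_⟩
  · rw [div_lt_iff₀ (by linarith)]; nlinarith
  · have : (2 * (f : ℝ) - 4) * π / (3 * (f : ℝ)) < (4 * (f : ℝ) - 2) * π / (3 * (f : ℝ)) := by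
      rw [div_lt_div_iff₀ (by linarith) (by linarith)]; nlinarith [mul_pos hπ hx0]
    exact ne_of_lt this
  · show Real.sin _ * _ = Real.sin _ * Real.sin _
    have h1 : 2 * π / (f : ℝ) - 4 * π / (f : ℝ) / 2 = 0 := by ring
    have h2 : (4 * (f : ℝ) - 2) * π / (3 * (f : ℝ)) -
        (2 * (f : ℝ) - 4) * π / (3 * (f : ℝ)) / 2 = π := by
      field_simp; ring
    rw [h1, h2, Real.sin_zero, Real.sin_pi]
    ring
end

section
/- Let f be an even integer with f ≥ 6 and let (α, β, γ, δ) be a good rational quadruple for f satisfying equation (E), β + 2γ = 2π, and 4δ = 2π. Then f = 16 and (α, β, γ, δ) = (π/4, π, π/2, π/2). -/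
open Real

lemma isIntegral_twoCos' (q : ℚ) : IsIntegral ℤ (2 * Real.cos ((q : ℝ) * π)) := by
  have hroot : ∀ z : ℂ, z ^ (2 * q.den) = 1 → IsIntegral ℤ z := by
    intro z hz
    refine ⟨Polynomial.X ^ (2 * q.den) - 1, ?_, ?_⟩
    · exact Polynomial.monic_X_pow_sub_C 1 (by positivity)
    · simp [hz]
  have hqq : ((q.den : ℚ)) * q = (q.num : ℚ) := by
    have hd : ((q.den : ℚ)) ≠ 0 := by exact_mod_cast q.den_ne_zero
    rw [mul_comm, ← eq_div_iff hd]
    exact (Rat.num_div_den q).symm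
  have hc : ((q.den : ℂ)) * (q : ℂ) = (q.num : ℂ) := by exact_mod_cast hqq
  have h1 : Complex.exp ((q : ℂ) * (π : ℂ) * Complex.I) ^ (2 * q.den) = 1 := by
    rw [← Complex.exp_nat_mul]
    have hq : ((2 * q.den : ℕ) : ℂ) * ((q : ℂ) * (π : ℂ) * Complex.I)
        = (q.num : ℤ) * (2 * (π : ℂ) * Complex.I) := by
      push_cast
      linear_combination (2 * (π : ℂ) * Complex.I) * hc
    rw [hq, Complex.exp_int_mul_two_pi_mul_I]
  have h2 : Complex.exp (-((q : ℂ) * (π : ℂ)) * Complex.I) ^ (2 * q.den) = 1 := by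
    rw [← Complex.exp_nat_mul]
    have hq : ((2 * q.den : ℕ) : ℂ) * (-((q : ℂ) * (π : ℂ)) * Complex.I)
        = (-q.num : ℤ) * (2 * (π : ℂ) * Complex.I) := by
      push_cast
      linear_combination (-2 * (π : ℂ) * Complex.I) * hc
    rw [hq, Complex.exp_int_mul_two_pi_mul_I]
  have hsum : IsIntegral ℤ (Complex.exp ((q : ℂ) * (π : ℂ) * Complex.I)
      + Complex.exp (-((q : ℂ) * (π : ℂ)) * Complex.I)) :=
    (hroot _ h1).add (hroot _ h2)
  have heq : ((2 * Real.cos ((q : ℝ) * π) : ℝ) : ℂ)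
      = Complex.exp ((q : ℂ) * (π : ℂ) * Complex.I)
        + Complex.exp (-((q : ℂ) * (π : ℂ)) * Complex.I) := by
    push_cast [Complex.ofReal_cos]
    exact Complex.two_cos _
  rw [show ((2 * Real.cos ((q : ℝ) * π) : ℝ) : ℂ)
      = algebraMap ℝ ℂ (2 * Real.cos ((q : ℝ) * π)) from rfl] at heq
  rw [← isIntegral_algebraMap_iff (algebraMap ℝ ℂ).injective, heq]
  exact hsum

lemma int_of_rat_integral' (q : ℚ) (h : IsIntegral ℤ ((q : ℝ))) : ∃ m : ℤ, (m : ℚ) = q := by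
  letI : IsIntegrallyClosed ℤ := GCDMonoid.toIsIntegrallyClosed
  have h' : IsIntegral ℤ q := by
    rwa [show ((q : ℝ)) = algebraMap ℚ ℝ q from rfl,
      isIntegral_algebraMap_iff (algebraMap ℚ ℝ).injective] at h
  exact IsIntegrallyClosed.isIntegral_iff.mp h'


private lemma case6' (γ : ℝ) (qγ : ℚ) (hqγ : γ = (qγ:ℝ) * π)
    (hk : 2 * Real.sin (π/3) * Real.cos (γ - π/2 + π/3) = Real.cos (2*(π/3))) : False := by
  have hθ : γ - π/2 + π/3 = ((qγ - 1/2 + 1/3 : ℚ) : ℝ) * π := by push_cast; rw [hqγ]; ring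
  have hw : IsIntegral ℤ (2 * Real.cos (γ - π/2 + π/3)) := by
    rw [hθ]; exact isIntegral_twoCos' _
  set w := 2 * Real.cos (γ - π/2 + π/3) with hwd
  have h3 : Real.sqrt 3 ^ 2 = 3 := Real.sq_sqrt (by norm_num)
  have hc23 : Real.cos (2*(π/3)) = -(1/2) := by
    rw [show (2*(π/3):ℝ) = π - π/3 by ring, Real.cos_pi_sub, Real.cos_pi_div_three]
  rw [Real.sin_pi_div_three, hc23] at hk
  have hw2 : w^2 = 1/3 := by
    have cw : w * Real.sqrt 3 = -1 := by rw [hwd]; linear_combination 2*hk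
    have h2' := congrArg (fun x : ℝ => x^2) cw
    simp only [mul_pow, h3] at h2'
    norm_num at h2'
    linarith
  have hint : IsIntegral ℤ (((1/3 : ℚ) : ℝ)) := by
    have he : (((1/3:ℚ)):ℝ) = w^2 := by rw [hw2]; norm_num
    rw [he]; exact hw.pow 2
  obtain ⟨m, hm⟩ := int_of_rat_integral' _ hint
  have h31 : ((3*m : ℤ) : ℚ) = 1 := by push_cast; rw [hm]; norm_num
  have : (3*m : ℤ) = 1 := by exact_mod_cast h31
  omega

private lemma case8' (α β γ δ : ℝ)
    (hγ : γ ∈ Set.Ioo 0 (2*π)) (hγπ : γ < π) (hbc2 : β = δ ↔ α = π)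
    (hβ' : β = 2*π - 2*γ) (hδ' : δ = π/2) (hα' : α = γ - π/2 + π/2)
    (hk : 2 * Real.sin (π/4) * Real.cos (γ - π/2 + π/4) = Real.cos (π/2)) :
    False := by
  have hπ : (0:ℝ) < π := pi_pos
  have hc : Real.cos (γ - π/2 + π/4) = Real.cos (π/2) := by
    rw [Real.cos_pi_div_two] at hk ⊢
    have hs4 : 0 < Real.sin (π/4) := sin_pos_of_pos_of_lt_pi (by positivity) (by linarith)
    nlinarith [hk]
  have h0 := Real.cos_sub_cos (γ - π/2 + π/4) (π/2)
  rw [hc, sub_self] at h0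
  have h0' : Real.sin ((γ - π/2 + π/4 + π/2)/2) * Real.sin ((γ - π/2 + π/4 - π/2)/2) = 0 := by
    linarith
  rcases mul_eq_zero.mp h0' with h | h
  · have hpos : 0 < Real.sin ((γ - π/2 + π/4 + π/2)/2) := by
      apply sin_pos_of_pos_of_lt_pi
      · linarith [hγ.1]
      · linarith
    linarith
  · have h2 : (γ - π/2 + π/4 - π/2)/2 = 0 := by
      rw [Real.sin_eq_zero_iff_of_lt_of_lt (by linarith [hγ.1]) (by linarith [hγ.2])] at h
      exact h
    have hγ2 : γ = 3*π/4 := by linarith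
    have hβδ : β = δ := by rw [hβ', hδ', hγ2]; ring
    have hαπ : α = π := hbc2.mp hβδ
    rw [hα', hγ2] at hαπ
    linarith

private lemma case10' (γ : ℝ) (qγ : ℚ) (hqγ : γ = (qγ:ℝ) * π)
    (hk : 2 * Real.sin (π/5) * Real.cos (γ - π/2 + π/5) = Real.cos (2*(π/5))) : False := by
  have hθ : γ - π/2 + π/5 = ((qγ - 1/2 + 1/5 : ℚ) : ℝ) * π := by push_cast; rw [hqγ]; ring
  have hw : IsIntegral ℤ (2 * Real.cos (γ - π/2 + π/5)) := by
    rw [hθ]; exact isIntegral_twoCos' _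
  set w := 2 * Real.cos (γ - π/2 + π/5) with hwd
  have h5 : Real.sqrt 5 ^ 2 = 5 := Real.sq_sqrt (by norm_num)
  have h5nn : 0 ≤ Real.sqrt 5 := Real.sqrt_nonneg 5
  have h5lt : Real.sqrt 5 < 3 := by nlinarith
  have hc5 : Real.cos (π/5) = (1 + Real.sqrt 5)/4 := Real.cos_pi_div_five
  have hc25 : Real.cos (2*(π/5)) = (Real.sqrt 5 - 1)/4 := by
    rw [Real.cos_two_mul, hc5]
    linear_combination (1/8) * h5
  have hs5sq : Real.sin (π/5)^2 = (5 - Real.sqrt 5)/8 := by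
    have hp := Real.sin_sq_add_cos_sq (π/5)
    rw [hc5] at hp
    linear_combination hp - (1/16) * h5
  have hk' : w * Real.sin (π/5) = (Real.sqrt 5 - 1)/4 := by
    rw [hwd, ← hc25]; linear_combination hk
  have hsq := congrArg (fun x : ℝ => x^2) hk'
  simp only [mul_pow] at hsq
  rw [hs5sq] at hsq
  have hw25 : w^2 * (5 - Real.sqrt 5) = 3 - Real.sqrt 5 := by
    linear_combination 8*hsq + (1/2)*h5
  have hw2 : w^2 = (5 - Real.sqrt 5)/10 := by
    have hne : (5:ℝ) - Real.sqrt 5 ≠ 0 := by nlinarith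
    apply mul_right_cancel₀ hne
    rw [hw25]
    linear_combination (-1/10)*h5
  have hval : w^2 - (w^2)^2 = 1/5 := by
    rw [hw2]; linear_combination (-1/100)*h5
  have hint : IsIntegral ℤ (((1/5 : ℚ) : ℝ)) := by
    have he : (((1/5:ℚ)):ℝ) = w^2 - (w^2)^2 := by rw [hval]; norm_num
    rw [he]; exact (hw.pow 2).sub ((hw.pow 2).pow 2)
  obtain ⟨m, hm⟩ := int_of_rat_integral' _ hint
  have h51 : ((5*m : ℤ) : ℚ) = 1 := by push_cast; rw [hm]; norm_num
  have : (5*m : ℤ) = 1 := by exact_mod_cast h51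
  omega

private lemma case12' (α β γ : ℝ)
    (hγ : γ ∈ Set.Ioo 0 (2*π)) (hβγ : β ≠ γ)
    (hβ' : β = 2*π - 2*γ)
    (hk : 2 * Real.sin (π/6) * Real.cos (γ - π/2 + π/6) = Real.cos (π/3)) :
    False := by
  have hπ : (0:ℝ) < π := pi_pos
  have hc : Real.cos (γ - π/2 + π/6) = Real.cos (π/3) := by
    rw [Real.sin_pi_div_six] at hk
    rw [← hk]; ring
  have h0 := Real.cos_sub_cos (γ - π/2 + π/6) (π/3)
  rw [hc, sub_self] at h0
  have h0' : Real.sin ((γ - π/2 + π/6 + π/3)/2) * Real.sin ((γ - π/2 + π/6 - π/3)/2) = 0 := by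
    linarith
  rcases mul_eq_zero.mp h0' with h | h
  · have hγ2 : 0 < Real.sin (γ/2) :=
      sin_pos_of_pos_of_lt_pi (by linarith [hγ.1]) (by linarith [hγ.2])
    rw [show (γ - π/2 + π/6 + π/3)/2 = γ/2 by ring] at h
    linarith
  · have h2 : (γ - π/2 + π/6 - π/3)/2 = 0 := by
      rw [Real.sin_eq_zero_iff_of_lt_of_lt (by linarith [hγ.1]) (by linarith [hγ.2])] at h
      exact h
    have hγ2 : γ = 2*π/3 := by linarith
    apply hβγ
    rw [hβ', hγ2]; ring

private lemma case14' (γ : ℝ) (qγ : ℚ) (hqγ : γ = (qγ:ℝ) * π)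
    (hk : 2 * Real.sin (π/7) * Real.cos (γ - π/2 + π/7) = Real.cos (2*(π/7))) : False := by
  have hπ : (0:ℝ) < π := pi_pos
  have hθ : γ - π/2 + π/7 = ((qγ - 1/2 + 1/7 : ℚ) : ℝ) * π := by push_cast; rw [hqγ]; ring
  have hw : IsIntegral ℤ (2 * Real.cos (γ - π/2 + π/7)) := by
    rw [hθ]; exact isIntegral_twoCos' _
  set w := 2 * Real.cos (γ - π/2 + π/7) with hwd
  set c := Real.cos (2*(π/7)) with hcd
  have h34 : Real.cos (4*(2*(π/7))) = Real.cos (3*(2*(π/7))) := by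
    rw [show (4*(2*(π/7)):ℝ) = 2*π - 3*(2*(π/7)) by ring, Real.cos_two_pi_sub]
  rw [show (4*(2*(π/7)):ℝ) = 2*(2*(2*(π/7))) by ring, Real.cos_two_mul, Real.cos_two_mul,
    Real.cos_three_mul, ← hcd] at h34
  have hsx : 0 < Real.sin (2*(π/7)) := sin_pos_of_pos_of_lt_pi (by positivity) (by linarith)
  have hc1 : c < 1 := by
    nlinarith [Real.sin_sq_add_cos_sq (2*(π/7)), Real.neg_one_le_cos (2*(π/7)), mul_pos hsx hsx]
  have hfac : (c - 1) * (8*c^3 + 4*c^2 - 4*c - 1) = 0 := by linear_combination h34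
  have hc3 : 8*c^3 + 4*c^2 - 4*c - 1 = 0 := by
    rcases mul_eq_zero.mp hfac with h | h
    · exfalso; have : c = 1 := by linarith
      exact absurd this (by linarith)
    · exact h
  have hs7 : Real.sin (π/7)^2 = (1 - c)/2 := by
    have h2 := Real.cos_two_mul' (π/7)
    rw [← hcd] at h2
    have hp := Real.sin_sq_add_cos_sq (π/7)
    linarith
  have hk' : w * Real.sin (π/7) = c := by rw [hwd]; linear_combination hk
  have hsq := congrArg (fun x : ℝ => x^2) hk'
  simp only [mul_pow] at hsq
  rw [hs7] at hsq
  have hw14 : w^2 * (1 - c) = 2*c^2 := by linear_combination 2*hsq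
  have hn1c : (1:ℝ) - c ≠ 0 := by
    intro h; rw [sub_eq_zero] at h; exact absurd h.symm (by linarith)
  have hy : w^2 = 2*c^2/(1 - c) := by field_simp; linear_combination hw14
  have hval : (w^2)^3 - 3*(w^2)^2 + 2*(w^2) = 1/7 := by
    rw [hy]
    field_simp
    ring_nf
    linear_combination (7*c^3 + 7*c^2 - 7*c + 1 - 7*c^6 + 14*c^5 + 7*c^4 - 43*c^3
      + 24*c^2 - 3*c + (3*c - 24*c^2 + 43*c^3 - 7*c^4 - 14*c^5 + 7*c^6)) * hc3
  have hint : IsIntegral ℤ (((1/7 : ℚ) : ℝ)) := by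
    have he : (((1/7:ℚ)):ℝ) = (w^2)^3 - ((w^2)^2 + (w^2)^2 + (w^2)^2) + (w^2 + w^2) := by
      rw [show (w^2)^3 - ((w^2)^2 + (w^2)^2 + (w^2)^2) + (w^2 + w^2)
        = (w^2)^3 - 3*(w^2)^2 + 2*(w^2) by ring, hval]; norm_num
    rw [he]
    exact (((hw.pow 2).pow 3).sub ((((hw.pow 2).pow 2).add ((hw.pow 2).pow 2)).add
      ((hw.pow 2).pow 2))).add ((hw.pow 2).add (hw.pow 2))
  obtain ⟨m, hm⟩ := int_of_rat_integral' _ hint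
  have h71 : ((7*m : ℤ) : ℚ) = 1 := by push_cast; rw [hm]; norm_num
  have : (7*m : ℤ) = 1 := by exact_mod_cast h71
  omega

private lemma case16' (α β γ δ : ℝ)
    (hα : α ∈ Set.Ioo 0 (2*π)) (hγ : γ ∈ Set.Ioo 0 (2*π))
    (hβ' : β = 2*π - 2*γ) (hδ' : δ = π/2) (hα' : α = γ - π/2 + π/4)
    (hk : 2 * Real.sin (π/8) * Real.cos (γ - π/2 + π/8) = Real.cos (π/4)) :
    α = π / 4 ∧ β = π ∧ γ = π / 2 ∧ δ = π / 2 := by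
  have hπ : (0:ℝ) < π := pi_pos
  have h8 : Real.cos (π/4) = 2 * Real.sin (π/8) * Real.cos (π/8) := by
    rw [Real.cos_pi_div_four, ← Real.sin_pi_div_four]
    have h := Real.sin_two_mul (π/8)
    rw [show 2*(π/8) = π/4 by ring] at h
    exact h
  have hc : Real.cos (γ - π/2 + π/8) = Real.cos (π/8) := by
    have hs8 : 0 < Real.sin (π/8) := sin_pos_of_pos_of_lt_pi (by positivity) (by linarith)
    apply mul_left_cancel₀ (show (2 * Real.sin (π/8) : ℝ) ≠ 0 by positivity)
    linear_combination hk + h8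
  have h0 := Real.cos_sub_cos (γ - π/2 + π/8) (π/8)
  rw [hc, sub_self] at h0
  have h0' : Real.sin ((γ - π/2 + π/8 + π/8)/2) * Real.sin ((γ - π/2 + π/8 - π/8)/2) = 0 := by
    linarith
  rcases mul_eq_zero.mp h0' with h | h
  · exfalso
    have hα2 : 0 < Real.sin (α/2) :=
      sin_pos_of_pos_of_lt_pi (by linarith [hα.1]) (by linarith [hα.2])
    rw [show (γ - π/2 + π/8 + π/8)/2 = α/2 by rw [hα']; ring] at h
    linarith
  · have h2 : (γ - π/2 + π/8 - π/8)/2 = 0 := by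
      rw [Real.sin_eq_zero_iff_of_lt_of_lt (by linarith [hγ.1]) (by linarith [hγ.2])] at h
      exact h
    have hγ2 : γ = π/2 := by linarith
    exact ⟨by rw [hα', hγ2]; ring, by rw [hβ', hγ2]; ring, hγ2, hδ'⟩

theorem stmt_10 (f : ℤ) (α β γ δ : ℝ) (hf : Even f) (hf6 : 6 ≤ f)
    (hgood : goodQuad f α β γ δ) (hE : eqE α β γ δ)
    (h1 : β + 2 * γ = 2 * π) (h2 : 4 * δ = 2 * π) :
    f = 16 ∧ α = π / 4 ∧ β = π ∧ γ = π / 2 ∧ δ = π / 2 := by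
  obtain ⟨-, -, hqα, hqβ, hqγ, hqδ, hα, hβ, hγ, hδ, hsum, hαδ, hβγ, hA, hB, hC, hD,
    hEE, hF, hbc1, hbc2, hineq1, hineq2⟩ := hgood
  have hE' : Real.sin (α - γ/2) * Real.sin (β/2) = Real.sin (γ/2) * Real.sin (δ - β/2) := hE
  have hπ : (0:ℝ) < π := pi_pos
  have hδ' : δ = π/2 := by linarith
  have hβ' : β = 2*π - 2*γ := by linarith
  have hγπ : γ < π := by linarith [hβ.1]
  have hα' : α = γ - π/2 + 4*π/(f:ℝ) := by linarith [hsum]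
  have hkey : 2 * Real.sin (2*π/(f:ℝ)) * Real.cos (γ - π/2 + 2*π/(f:ℝ))
      = Real.cos (2*(2*π/(f:ℝ))) := by
    have hs2 : 0 < Real.sin (γ/2) :=
      sin_pos_of_pos_of_lt_pi (by linarith [hγ.1]) (by linarith [hγ.2])
    rw [hα', hβ', hδ'] at hE'
    rw [show γ - π/2 + 4*π/(f:ℝ) - γ/2 = -(π/2 - (γ/2 + 2*(2*π/(f:ℝ)))) by ring,
      Real.sin_neg, Real.sin_pi_div_two_sub,
      show (2*π - 2*γ)/2 = π - γ by ring, Real.sin_pi_sub,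
      show π/2 - (π - γ) = -(π/2 - γ) by ring, Real.sin_neg, Real.sin_pi_div_two_sub] at hE'
    have hsinγ : Real.sin γ = 2 * Real.sin (γ/2) * Real.cos (γ/2) := by
      have h := Real.sin_two_mul (γ/2); rw [show 2*(γ/2) = γ by ring] at h; exact h
    have hcosγ : Real.cos γ = 2 * Real.cos (γ/2)^2 - 1 := by
      have h := Real.cos_two_mul (γ/2); rw [show 2*(γ/2) = γ by ring] at h; exact h
    rw [hsinγ, hcosγ, Real.cos_add, Real.cos_two_mul', Real.sin_two_mul] at hE'
    have hE3 : (Real.cos (γ/2) * (Real.cos (2*π/(f:ℝ))^2 - Real.sin (2*π/(f:ℝ))^2)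
        - Real.sin (γ/2) * (2 * Real.sin (2*π/(f:ℝ)) * Real.cos (2*π/(f:ℝ)))) * (2 * Real.cos (γ/2))
        = 2 * Real.cos (γ/2)^2 - 1 := by
      apply mul_left_cancel₀ (ne_of_gt hs2)
      linear_combination -hE'
    rw [show γ - π/2 + 2*π/(f:ℝ) = -(π/2 - (γ + 2*π/(f:ℝ))) by ring, Real.cos_neg,
      Real.cos_pi_div_two_sub, Real.sin_add, hsinγ, hcosγ, Real.cos_two_mul']
    linear_combination -hE3 + (2*Real.cos (γ/2)^2 - 1) * Real.sin_sq_add_cos_sq (2*π/(f:ℝ))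
  have hf16 : f ≤ 16 := by
    by_contra hcon
    push_neg at hcon
    have hf18 : 18 ≤ f := by obtain ⟨k, hk2⟩ := hf; omega
    have hf' : (18:ℝ) ≤ (f:ℝ) := by exact_mod_cast hf18
    have hfpos : (0:ℝ) < (f:ℝ) := by linarith
    set u := 2*π/(f:ℝ) with hu
    have hu0 : 0 < u := by positivity
    have hu35 : u ≤ 7/20 := by
      have hb : u ≤ 2*π/18 := by
        rw [hu]
        apply div_le_div_of_nonneg_left (by positivity) (by norm_num) hf'
      have := Real.pi_lt_d2
      linarith
    have hπ3 := Real.pi_gt_three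
    have hsu : 0 < Real.sin u := sin_pos_of_pos_of_lt_pi hu0 (by linarith)
    have hsul : Real.sin u < u := Real.sin_lt hu0
    have hcos2u : Real.cos (2*u) = 1 - 2 * Real.sin u ^ 2 := by
      rw [Real.cos_two_mul']
      linear_combination Real.sin_sq_add_cos_sq u
    have hc1 : Real.cos (γ - π/2 + u) ≤ 1 := Real.cos_le_one _
    have hprod : Real.sin u * (1 - Real.cos (γ - π/2 + u)) ≥ 0 :=
      mul_nonneg (le_of_lt hsu) (by linarith)
    nlinarith [hkey, hcos2u, sq_nonneg (Real.sin u),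
      mul_le_mul_of_nonneg_left hu35 (le_of_lt hu0)]
  interval_cases f
  · exfalso
    obtain ⟨qγ, hqγ⟩ := hqγ
    rw [show ((6:ℤ):ℝ) = 6 by norm_num, show 2*π/(6:ℝ) = π/3 by ring] at hkey
    exact case6' γ qγ hqγ hkey
  · exact absurd hf (by decide)
  · exfalso
    rw [show ((8:ℤ):ℝ) = 8 by norm_num, show 2*π/(8:ℝ) = π/4 by ring,
      show (2*(π/4):ℝ) = π/2 by ring] at hkey
    rw [show ((8:ℤ):ℝ) = 8 by norm_num, show 4*π/(8:ℝ) = π/2 by ring] at hα'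
    exact case8' α β γ δ hγ hγπ hbc2 hβ' hδ' hα' hkey
  · exact absurd hf (by decide)
  · exfalso
    obtain ⟨qγ, hqγ⟩ := hqγ
    rw [show ((10:ℤ):ℝ) = 10 by norm_num, show 2*π/(10:ℝ) = π/5 by ring] at hkey
    exact case10' γ qγ hqγ hkey
  · exact absurd hf (by decide)
  · exfalso
    rw [show ((12:ℤ):ℝ) = 12 by norm_num, show 2*π/(12:ℝ) = π/6 by ring,
      show (2*(π/6):ℝ) = π/3 by ring] at hkey
    exact case12' α β γ hγ hβγ hβ' hkey
  · exact absurd hf (by decide)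
  · exfalso
    obtain ⟨qγ, hqγ⟩ := hqγ
    rw [show ((14:ℤ):ℝ) = 14 by norm_num, show 2*π/(14:ℝ) = π/7 by ring] at hkey
    exact case14' γ qγ hqγ hkey
  · exact absurd hf (by decide)
  · rw [show ((16:ℤ):ℝ) = 16 by norm_num, show 2*π/(16:ℝ) = π/8 by ring,
      show (2*(π/8):ℝ) = π/4 by ring] at hkey
    rw [show ((16:ℤ):ℝ) = 16 by norm_num, show 4*π/(16:ℝ) = π/4 by ring] at hα'
    exact ⟨rfl, case16' α β γ δ hα hγ hβ' hδ' hα' hkey⟩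
end

section
/- Let f be an even integer with f ≥ 6 and let (α, β, γ, δ) be a good rational quadruple for f satisfying equation (E), 2α + β = 2π, and 4β = 2π. Then f = 6 and (α, β, γ, δ) = (3π/4, π/2, π, 5π/12). -/
open Real

lemma sqrt2_sq : Real.sqrt 2 * Real.sqrt 2 = 2 :=
  Real.mul_self_sqrt (by norm_num)

lemma sqrt3_sq : Real.sqrt 3 * Real.sqrt 3 = 3 :=
  Real.mul_self_sqrt (by norm_num)

lemma one_lt_sqrt3 : (1:ℝ) < Real.sqrt 3 := by
  nlinarith [sqrt3_sq, Real.sqrt_nonneg 3]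

/-- factorization identity for `θ = 2π/3` -/
lemma idK6 (γ : ℝ) :
    Real.cos (γ/2) + Real.sin (γ/2) - 2 * Real.sin (γ/2) * Real.cos (γ - 2*π/3)
      = Real.cos (γ/2) * (Real.sin γ + Real.sqrt 3 * Real.cos γ + 1 - Real.sqrt 3) := by
  have hs : Real.sin γ = 2 * Real.sin (γ/2) * Real.cos (γ/2) := by
    rw [← Real.sin_two_mul]; congr 1; ring
  have hc : Real.cos γ = 2 * Real.cos (γ/2) ^ 2 - 1 := by
    rw [← Real.cos_two_mul]; congr 1; ring
  have hcs : Real.cos (γ - 2*π/3) = Real.cos γ * (-(1/2)) + Real.sin γ * (Real.sqrt 3 / 2) := by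
    rw [Real.cos_sub]
    have h1 : Real.cos (2*π/3) = -(1/2) := by
      rw [show (2*π/3 : ℝ) = π - π/3 by ring, Real.cos_pi_sub, Real.cos_pi_div_three]
    have h2 : Real.sin (2*π/3) = Real.sqrt 3 / 2 := by
      rw [show (2*π/3 : ℝ) = π - π/3 by ring, Real.sin_pi_sub, Real.sin_pi_div_three]
    rw [h1, h2]
  rw [hcs, hs, hc]
  have hpy : Real.sin (γ/2) ^ 2 + Real.cos (γ/2) ^ 2 = 1 := Real.sin_sq_add_cos_sq _
  linear_combination (-2*Real.sqrt 3*Real.cos (γ/2)) * hpy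

/-- factorization identity for `θ = π/2` -/
lemma idK8 (γ : ℝ) :
    Real.cos (γ/2) + Real.sin (γ/2) - 2 * Real.sin (γ/2) * Real.cos (γ - π/2)
      = (Real.cos (γ/2) - Real.sin (γ/2)) * (Real.cos γ + Real.sin γ) := by
  have hs : Real.sin γ = 2 * Real.sin (γ/2) * Real.cos (γ/2) := by
    rw [← Real.sin_two_mul]; congr 1; ring
  have hc : Real.cos γ = 2 * Real.cos (γ/2) ^ 2 - 1 := by
    rw [← Real.cos_two_mul]; congr 1; ring
  have hcs : Real.cos (γ - π/2) = Real.sin γ := by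
    rw [Real.cos_sub, Real.cos_pi_div_two, Real.sin_pi_div_two]; ring
  rw [hcs, hs, hc]
  have hpy : Real.sin (γ/2) ^ 2 + Real.cos (γ/2) ^ 2 = 1 := Real.sin_sq_add_cos_sq _
  linear_combination (-2*Real.cos (γ/2)) * hpy

lemma polyAux (A v : ℝ) (hA0 : 0 ≤ A) (hA1 : A ≤ 0.236)
    (hv0 : 0.3141592 + 2*A ≤ v) (hv1 : v ≤ 0.7862) :
    (1+A) * (1 - v^2/2 + v^4*(5/96)) < 1 - A^2/2 := by
  obtain ⟨w, hw⟩ : ∃ w : ℝ, w = 0.3141592 + 2*A := ⟨_, rfl⟩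
  have hwv : w ≤ v := by rw [hw]; linarith
  have hw0 : 0 < w := by rw [hw]; linarith
  have hwu : w ≤ 0.7862 := by linarith
  have hsq : w^2 ≤ v^2 := by nlinarith
  have hsqu : v^2 + w^2 ≤ 1.3 := by nlinarith
  have hmono : 1 - v^2/2 + v^4*(5/96) ≤ 1 - w^2/2 + w^4*(5/96) := by
    nlinarith [mul_nonneg (sub_nonneg.2 hsq) (by linarith : (0:ℝ) ≤ 1/2 - (v^2+w^2)*(5/96))]
  have hfin : (1+A) * (1 - w^2/2 + w^4*(5/96)) < 1 - A^2/2 := by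
    rw [hw]
    have hc3 : 0 ≤ A^3 := pow_nonneg hA0 3
    have h4 : A^4 ≤ 0.236 * A^3 := by nlinarith [hc3]
    have h5 : A^5 ≤ 0.0557 * A^3 := by nlinarith [hc3, h4]
    nlinarith [sq_nonneg (A - 0.0843), hc3, h4, h5, hA0]
  calc (1+A) * (1 - v^2/2 + v^4*(5/96)) ≤ (1+A) * (1 - w^2/2 + w^4*(5/96)) :=
        mul_le_mul_of_nonneg_left hmono (by linarith)
    _ < 1 - A^2/2 := hfin

lemma keyIneq (A : ℝ) (h0 : 0 ≤ A) (h1 : A ≤ 3*π/40) :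
    (Real.sin A + Real.cos A) * Real.cos (π/10 + 2*A) < Real.cos A := by
  have hπl : 3.141592 < π := Real.pi_gt_d6
  have hπu : π < 3.141593 := Real.pi_lt_d6
  have hA1 : A ≤ 0.236 := by linarith
  obtain ⟨v, hv⟩ : ∃ v : ℝ, v = π/10 + 2*A := ⟨_, rfl⟩
  rw [← hv]
  have hv0 : 0.3141592 + 2*A ≤ v := by rw [hv]; linarith
  have hv1 : v ≤ 0.7862 := by rw [hv]; linarith
  have hvpos : 0 < v := by linarith
  have hvabs : |v| ≤ 1 := by rw [abs_of_pos hvpos]; linarith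
  have hcb := Real.cos_bound hvabs
  rw [abs_of_pos hvpos] at hcb
  have hcosv_ub : Real.cos v ≤ 1 - v^2/2 + v^4*(5/96) := by
    have := (abs_le.1 hcb).2; linarith
  have hcosv_nn : 0 ≤ Real.cos v := by
    apply Real.cos_nonneg_of_mem_Icc
    constructor <;> linarith
  have hsinA : Real.sin A ≤ A := Real.sin_le h0
  have hsinA_nn : 0 ≤ Real.sin A := Real.sin_nonneg_of_nonneg_of_le_pi h0 (by linarith)
  have hcosA1 : Real.cos A ≤ 1 := Real.cos_le_one A
  have hcosA_lb : 1 - A^2/2 ≤ Real.cos A := Real.one_sub_sq_div_two_le_cos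
  have h1' : (Real.sin A + Real.cos A) * Real.cos v ≤ (1+A) * Real.cos v := by
    apply mul_le_mul_of_nonneg_right _ hcosv_nn
    linarith
  have h2' : (1+A) * Real.cos v ≤ (1+A) * (1 - v^2/2 + v^4*(5/96)) :=
    mul_le_mul_of_nonneg_left hcosv_ub (by linarith)
  have h3' := polyAux A v h0 hA1 hv0 hv1
  linarith

set_option maxHeartbeats 2000000 in
theorem stmt_12 (f : ℤ) (α β γ δ : ℝ) (hf : Even f) (hf6 : 6 ≤ f)
    (hgood : goodQuad f α β γ δ) (hE : eqE α β γ δ)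
    (h1 : 2 * α + β = 2 * π) (h2 : 4 * β = 2 * π) :
    f = 6 ∧ α = 3 * π / 4 ∧ β = π / 2 ∧ γ = π ∧ δ = 5 * π / 12 := by
  obtain ⟨-, -, -, -, -, -, hαI, hβI, hγI, hδI, hsum, hαδ, hβγ, hp1, hp2, hp3,
    hp4, hp5, hp6, hiff1, hiff2, hδle, hall⟩ := hgood
  have hπ := Real.pi_pos
  have hβ : β = π/2 := by linarith
  have hα : α = 3*π/4 := by linarith
  subst hβ hα
  have hf6' : (6:ℝ) ≤ (f:ℝ) := by exact_mod_cast hf6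
  have hf0 : (0:ℝ) < (f:ℝ) := by linarith
  obtain ⟨θ, hθdef⟩ : ∃ θ:ℝ, θ = 4*π/(f:ℝ) := ⟨_, rfl⟩
  have hθpos : 0 < θ := by rw [hθdef]; positivity
  have hθle : θ ≤ 2*π/3 := by
    rw [hθdef, div_le_iff₀ hf0]; nlinarith
  have hγδ : γ + δ = 3*π/4 + θ := by rw [hθdef]; linarith [hsum]
  have hγ2pos : 0 < Real.sin (γ/2) :=
    Real.sin_pos_of_pos_of_lt_pi (by linarith [hγI.1]) (by linarith [hγI.2])
  -- the key trigonometric equation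
  have hK : Real.cos (γ/2) + Real.sin (γ/2) = 2 * Real.sin (γ/2) * Real.cos (γ - θ) := by
    have hE' := hE
    unfold eqE at hE'
    have e1 : Real.sin (3*π/4 - γ/2) = Real.sqrt 2/2 * (Real.cos (γ/2) + Real.sin (γ/2)) := by
      rw [Real.sin_sub, show (3*π/4:ℝ) = π - π/4 by ring, Real.sin_pi_sub, Real.cos_pi_sub,
        Real.sin_pi_div_four, Real.cos_pi_div_four]; ring
    have e2 : Real.sin (π/2/2) = Real.sqrt 2/2 := by
      rw [show (π/2/2:ℝ) = π/4 by ring, Real.sin_pi_div_four]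
    have e3 : Real.sin (δ - π/2/2) = Real.cos (γ - θ) := by
      rw [show δ - π/2/2 = π/2 - (γ - θ) by linarith, Real.sin_pi_div_two_sub]
    rw [e1, e2, e3] at hE'
    linear_combination 2*hE' - ((Real.cos (γ/2) + Real.sin (γ/2))/2) * sqrt2_sq
  -- γ > π/2
  have hγgt : π/2 < γ := by
    rcases lt_trichotomy γ (π/2) with h | h | h
    · exfalso
      have hc : Real.cos (γ/2) > Real.sqrt 2/2 := by
        have := Real.cos_lt_cos_of_nonneg_of_le_pi (by linarith [hγI.1] : (0:ℝ) ≤ γ/2)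
          (by linarith : π/4 ≤ π) (by linarith : γ/2 < π/4)
        rwa [Real.cos_pi_div_four] at this
      have hs : Real.sin (γ/2) < Real.sqrt 2/2 := by
        have := Real.sin_lt_sin_of_lt_of_le_pi_div_two
          (by linarith [hγI.1] : -(π/2) ≤ γ/2) (by linarith : π/4 ≤ π/2)
          (by linarith : γ/2 < π/4)
        rwa [Real.sin_pi_div_four] at this
      have hcosle : Real.cos (γ - θ) ≤ 1 := Real.cos_le_one _
      nlinarith [hγ2pos, hK, hcosle, hc, hs]
    · exact absurd h.symm hβγ
    · exact h
  have hδlt : δ < π := by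
    by_contra h
    push_neg at h
    have : γ ≤ 5*π/12 := by linarith
    linarith
  have hδne : δ ≠ π/2 := by
    intro h
    have := hiff2.1 h.symm
    linarith
  rcases le_or_gt π γ with hγge | hγlt
  · -- case γ ≥ π : the actual solution
    have hγub : γ < 3*π/4 + θ := by linarith [hδI.1]
    have hcs_pos : 0 < Real.cos (γ/2) + Real.sin (γ/2) := by
      have hpos : 0 < Real.sin (γ/2 + π/4) :=
        Real.sin_pos_of_pos_of_lt_pi (by linarith [hγI.1]) (by linarith)
      have hid : Real.sin (γ/2 + π/4) = (Real.cos (γ/2) + Real.sin (γ/2)) * (Real.sqrt 2/2) := by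
        rw [Real.sin_add, Real.sin_pi_div_four, Real.cos_pi_div_four]; ring
      have hs2 : (0:ℝ) < Real.sqrt 2 := by positivity
      nlinarith [hpos, hid, hs2]
    have hθgt : π/2 < θ := by
      by_contra h
      push_neg at h
      have hδ4 : δ ≤ π/4 := by linarith
      have hcos : Real.cos (γ - θ) ≤ 0 :=
        Real.cos_nonpos_of_pi_div_two_le_of_le (by linarith) (by linarith [hδI.1])
      nlinarith [hγ2pos, hK, hcos, hcs_pos]
    have hf8 : f < 8 := by
      have hr : (f:ℝ) < 8 := by
        rw [hθdef] at hθgt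
        have := (lt_div_iff₀ hf0).1 hθgt
        nlinarith
      exact_mod_cast hr
    have hfeq : f = 6 := by obtain ⟨k, hk⟩ := hf; omega
    have hθval : θ = 2*π/3 := by rw [hθdef, hfeq]; push_cast; ring
    have hzero : Real.cos (γ/2) * (Real.sin γ + Real.sqrt 3 * Real.cos γ + 1 - Real.sqrt 3) = 0 := by
      rw [← idK6 γ]
      rw [hθval] at hK
      linarith
    have hsin_np : Real.sin γ ≤ 0 := by
      have h1 : 0 ≤ Real.sin (γ - π) :=
        Real.sin_nonneg_of_nonneg_of_le_pi (by linarith) (by linarith)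
      rw [Real.sin_sub_pi] at h1; linarith
    have hcos_np : Real.cos γ ≤ 0 :=
      Real.cos_nonpos_of_pi_div_two_le_of_le (by linarith) (by linarith)
    have h3 := one_lt_sqrt3
    have h3n : (0:ℝ) ≤ Real.sqrt 3 := Real.sqrt_nonneg 3
    have hfac_neg : Real.sin γ + Real.sqrt 3 * Real.cos γ + 1 - Real.sqrt 3 < 0 := by
      nlinarith [hsin_np, hcos_np]
    have hcz : Real.cos (γ/2) = 0 := by
      rcases mul_eq_zero.1 hzero with h | h
      · exact h
      · linarith
    obtain ⟨k, hk⟩ := Real.cos_eq_zero_iff.1 hcz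
    have hk0 : k = 0 := by
      have hkl : (0:ℝ) < (k:ℝ) + 1 := by nlinarith
      have hku : (k:ℝ) < 1 := by nlinarith
      have l1 : (-1:ℤ) < k := by exact_mod_cast (by linarith : (-1:ℝ) < (k:ℝ))
      have l2 : (k:ℤ) < 1 := by exact_mod_cast hku
      omega
    rw [hk0] at hk
    push_cast at hk
    have hγπ : γ = π := by linarith
    exact ⟨hfeq, rfl, rfl, hγπ, by linarith⟩
  · -- case γ < π : contradiction
    exfalso
    obtain ⟨hiff3, hd1, -, hd2, -⟩ := hall ⟨by linarith, by linarith, hγlt, hδlt⟩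
    have hδub : δ < 3*π/4 := by linarith
    have hδlb : π/4 < δ := by linarith
    have hc_pos : 0 < Real.cos (γ/2) :=
      Real.cos_pos_of_mem_Ioo ⟨by linarith [hγI.1], by linarith⟩
    have hc_lt : Real.cos (γ/2) < Real.sqrt 2/2 := by
      have := Real.cos_lt_cos_of_nonneg_of_le_pi (by linarith : (0:ℝ) ≤ π/4)
        (by linarith : γ/2 ≤ π) (by linarith : π/4 < γ/2)
      rwa [Real.cos_pi_div_four] at this
    have hs_gt : Real.sqrt 2/2 < Real.sin (γ/2) := by
      have := Real.sin_lt_sin_of_lt_of_le_pi_div_two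
        (by linarith : -(π/2) ≤ π/4) (by linarith : γ/2 ≤ π/2) (by linarith : π/4 < γ/2)
      rwa [Real.sin_pi_div_four] at this
    have hKD : Real.cos (γ/2) + Real.sin (γ/2) = 2 * Real.sin (γ/2) * Real.sin (δ - π/4) := by
      have e : Real.cos (γ - θ) = Real.sin (δ - π/4) := by
        rw [show γ - θ = π/2 - (δ - π/4) by linarith, Real.cos_pi_div_two_sub]
      rw [hK, e]
    have hsinD : 1/2 < Real.sin (δ - π/4) := by nlinarith [hγ2pos, hKD, hc_pos]
    have hDgt : π/6 < δ - π/4 := by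
      by_contra h
      push_neg at h
      have hmono := Real.strictMonoOn_sin.monotoneOn
        (Set.mem_Icc.2 ⟨by linarith, by linarith⟩ : (δ - π/4) ∈ Set.Icc (-(π/2)) (π/2))
        (Set.mem_Icc.2 ⟨by linarith, by linarith⟩ : (π/6:ℝ) ∈ Set.Icc (-(π/2)) (π/2)) h
      rw [Real.sin_pi_div_six] at hmono
      linarith
    have hcase : f = 6 ∨ f = 8 ∨ 10 ≤ f := by obtain ⟨k, hk⟩ := hf; omega
    rcases hcase with hfeq | hfeq | hf10
    · -- f = 6
      have hθv : θ = 2*π/3 := by rw [hθdef, hfeq]; push_cast; ring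
      have hγgt23 : 2*π/3 < γ := by rw [hθv] at hγδ; linarith
      have hzero : Real.cos (γ/2) * (Real.sin γ + Real.sqrt 3 * Real.cos γ + 1 - Real.sqrt 3) = 0 := by
        rw [← idK6 γ]
        rw [hθv] at hK
        linarith
      have hsinlt : Real.sin (γ + π/3) < 0 := by
        have hp : 0 < Real.sin (γ + π/3 - π) :=
          Real.sin_pos_of_pos_of_lt_pi (by linarith) (by linarith)
        rw [Real.sin_sub_pi] at hp; linarith
      have hid : Real.sin γ + Real.sqrt 3 * Real.cos γ = 2*Real.sin (γ + π/3) := by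
        rw [Real.sin_add, Real.cos_pi_div_three, Real.sin_pi_div_three]; ring
      have h3 := one_lt_sqrt3
      have hneg : Real.sin γ + Real.sqrt 3 * Real.cos γ + 1 - Real.sqrt 3 < 0 := by
        rw [hid]; linarith
      nlinarith [mul_neg_of_pos_of_neg hc_pos hneg, hzero]
    · -- f = 8
      have hθv : θ = π/2 := by rw [hθdef, hfeq]; push_cast; ring
      have hzero : (Real.cos (γ/2) - Real.sin (γ/2)) * (Real.cos γ + Real.sin γ) = 0 := by
        rw [← idK8 γ]
        rw [hθv] at hK
        linarith
      have hne : Real.cos (γ/2) - Real.sin (γ/2) ≠ 0 := by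
        intro h; nlinarith [hc_lt, hs_gt]
      have hcs0 : Real.cos γ + Real.sin γ = 0 := by
        rcases mul_eq_zero.1 hzero with h | h
        · exact absurd h hne
        · exact h
      have hid : Real.sqrt 2 * Real.sin (γ + π/4) = Real.cos γ + Real.sin γ := by
        rw [Real.sin_add, Real.sin_pi_div_four, Real.cos_pi_div_four]
        linear_combination ((Real.sin γ + Real.cos γ)/2) * sqrt2_sq
      have hs2 : (0:ℝ) < Real.sqrt 2 := by positivity
      have hsin0 : Real.sin (γ + π/4) = 0 := by
        have h0 : Real.sqrt 2 * Real.sin (γ + π/4) = 0 := by rw [hid, hcs0]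
        rcases mul_eq_zero.1 h0 with h | h
        · linarith
        · exact h
      obtain ⟨n, hn⟩ := Real.sin_eq_zero_iff.1 hsin0
      have hn1 : n = 1 := by
        have l1 : (0:ℝ) < (n:ℝ) := by nlinarith
        have l2 : (n:ℝ) < 2 := by nlinarith
        have m1 : (0:ℤ) < n := by exact_mod_cast l1
        have m2 : (n:ℤ) < 2 := by exact_mod_cast l2
        omega
      rw [hn1] at hn
      push_cast at hn
      have hγ34 : γ = 3*π/4 := by linarith
      apply hδne
      rw [hθv] at hγδ
      linarith
    · -- 10 ≤ f
      have hf10' : (10:ℝ) ≤ (f:ℝ) := by exact_mod_cast hf10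
      have hθ25 : θ ≤ 2*π/5 := by
        rw [hθdef, div_le_iff₀ hf0]; nlinarith
      have hδgt : π/2 < δ := by
        rcases lt_trichotomy δ (π/2) with h | h | h
        · exfalso
          have hγ34 : 3*π/4 < γ := hiff3.1 h
          linarith
        · exact absurd h hδne
        · exact h
      obtain ⟨A, hA⟩ : ∃ A:ℝ, A = γ/2 - π/4 := ⟨_, rfl⟩
      have hA0 : 0 < A := by rw [hA]; linarith
      have hAub : A < 3*π/40 := by rw [hA]; linarith
      have hmono : Real.sin (δ - π/4) ≤ Real.sin (2*π/5 - 2*A) := by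
        apply Real.strictMonoOn_sin.monotoneOn
          (Set.mem_Icc.2 ⟨by linarith, by linarith⟩)
          (Set.mem_Icc.2 ⟨by linarith, by linarith⟩)
        rw [hA]; linarith
      have hcoseq : Real.sin (2*π/5 - 2*A) = Real.cos (π/10 + 2*A) := by
        rw [← Real.cos_pi_div_two_sub]; congr 1; ring
      have hce : Real.cos (γ/2) = (Real.cos A - Real.sin A) * (Real.sqrt 2/2) := by
        rw [show γ/2 = A + π/4 by rw [hA]; ring, Real.cos_add,
          Real.sin_pi_div_four, Real.cos_pi_div_four]; ring
      have hse : Real.sin (γ/2) = (Real.sin A + Real.cos A) * (Real.sqrt 2/2) := by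
        rw [show γ/2 = A + π/4 by rw [hA]; ring, Real.sin_add,
          Real.sin_pi_div_four, Real.cos_pi_div_four]; ring
      have hkey := keyIneq A (le_of_lt hA0) (le_of_lt hAub)
      have hs2 : (0:ℝ) < Real.sqrt 2 := by positivity
      have hub : Real.cos (γ/2) + Real.sin (γ/2)
          ≤ 2 * Real.sin (γ/2) * Real.cos (π/10 + 2*A) := by
        rw [hKD]
        have := mul_le_mul_of_nonneg_left (hmono.trans_eq hcoseq)
          (by linarith : (0:ℝ) ≤ 2 * Real.sin (γ/2))
        linarith [this]
      -- convert to the A variable and contradict keyIneq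
      rw [hce, hse] at hub
      nlinarith [hub, hkey, hs2, sqrt2_sq,
        mul_pos hs2 (sub_pos.2 hkey)]
end

section
/- Let f be an even integer with f ≥ 6 and let (α, β, γ, δ) be a good rational quadruple for f satisfying equation (E), β + 2δ = 2π, and 2α + 2γ = 2π. Then f = 8 and (α, β, γ, δ) = (π/3, π, 2π/3, π/2). -/
open Real Polynomial Polynomial.Chebyshev

lemma cheb_step (y : ℝ) (hy : 1 < y) :
    ∀ n : ℕ, 1 ≤ (T ℝ n).eval y ∧ (T ℝ n).eval y < (T ℝ ((n : ℤ) + 1)).eval y := by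
  intro n
  induction n with
  | zero => simp [T_zero, T_one]; exact hy
  | succ n ih =>
    obtain ⟨h1, h2⟩ := ih
    push_cast at h2 ⊢
    constructor
    · linarith
    · have hT : (T ℝ ((n : ℤ) + 2)) = 2 * X * T ℝ ((n : ℤ) + 1) - T ℝ (n : ℤ) := T_add_two ℝ n
      have he : (T ℝ ((n : ℤ) + 1 + 1)).eval y
          = 2 * y * (T ℝ ((n : ℤ) + 1)).eval y - (T ℝ (n : ℤ)).eval y := by
        rw [show ((n : ℤ) + 1 + 1) = (n : ℤ) + 2 by ring, hT]
        simp
      rw [he]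
      nlinarith

lemma cheb_gt (y : ℝ) (hy : 1 < y) (n : ℕ) (hn : 1 ≤ n) : 1 < (T ℝ n).eval y := by
  induction n with
  | zero => omega
  | succ n ih =>
    rcases Nat.lt_or_ge n 1 with h | h
    · have : n = 0 := by omega
      subst this
      simpa [T_one] using hy
    · have hs := (cheb_step y hy n).2
      have := ih h
      push_cast at *
      linarith

lemma conj_transfer (p : Polynomial ℚ) (hp : Irreducible p) (θ θ' : ℝ)
    (h1 : aeval θ p = 0) (h2 : aeval θ' p = 0) (P : Polynomial ℚ)
    (hP : aeval (1 - θ) P = 0) : aeval (1 - θ') P = 0 := by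
  haveI : Fact (Irreducible p) := ⟨hp⟩
  let φ : AdjoinRoot p →ₐ[ℚ] ℝ := AdjoinRoot.liftAlgHom p (Algebra.ofId ℚ ℝ) θ h1
  let ψ : AdjoinRoot p →ₐ[ℚ] ℝ := AdjoinRoot.liftAlgHom p (Algebra.ofId ℚ ℝ) θ' h2
  have hξ : aeval ((1 : AdjoinRoot p) - AdjoinRoot.root p) P = 0 := by
    have hinj : Function.Injective φ := φ.toRingHom.injective
    apply hinj
    rw [map_zero, ← Polynomial.aeval_algHom_apply]
    have : φ (1 - AdjoinRoot.root p) = 1 - θ := by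
      rw [map_sub, map_one]
      simp [φ, AdjoinRoot.liftAlgHom_root]
      exact AdjoinRoot.liftAlgHom_root _ _ _ _
    rw [this, hP]
  have := Polynomial.aeval_algHom_apply ψ ((1 : AdjoinRoot p) - AdjoinRoot.root p) P
  rw [hξ, map_zero] at this
  have hψ : ψ (1 - AdjoinRoot.root p) = 1 - θ' := by
    rw [map_sub, map_one]
    simp [ψ, AdjoinRoot.liftAlgHom_root]
    exact AdjoinRoot.liftAlgHom_root _ _ _ _
  rw [hψ] at this
  exact this

lemma niven_master (q : ℚ) (p : Polynomial ℚ) (hp : Irreducible p) (θ θ' : ℝ)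
    (h1 : aeval θ p = 0) (h2 : aeval θ' p = 0) (hbig : 2 < 1 - θ')
    (hcos : 2 * Real.cos ((q : ℝ) * π) = 1 - θ) : False := by
  set N : ℕ := 2 * q.den with hN
  have hN1 : 1 ≤ N := by
    have := q.den_nz
    omega
  set P : Polynomial ℚ := (T ℚ (N : ℤ)).comp (Polynomial.C (1/2 : ℚ) * X) - 1 with hPdef
  have hev : ∀ y : ℝ, aeval y P = (T ℝ (N : ℤ)).eval (y / 2) - 1 := by
    intro y
    rw [hPdef, map_sub, map_one, Polynomial.aeval_comp]
    have : aeval y (Polynomial.C (1/2 : ℚ) * X) = y / 2 := by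
      simp; ring
    rw [this, Polynomial.aeval_def, Polynomial.eval₂_eq_eval_map, Polynomial.Chebyshev.map_T]
  have hroot : aeval (1 - θ) P = 0 := by
    rw [hev]
    have hhalf : (1 - θ) / 2 = Real.cos ((q : ℝ) * π) := by linarith
    rw [hhalf, Polynomial.Chebyshev.T_real_cos]
    have harg : ((N : ℤ) : ℝ) * ((q : ℝ) * π) = (q.num : ℤ) * (2 * π) := by
      have hden : (q.den : ℚ) ≠ 0 := by exact_mod_cast q.den_nz
      have hdq : (q.num : ℚ) = q * q.den := (div_eq_iff hden).mp (Rat.num_div_den q)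
      have hd : (q.num : ℝ) = (q : ℝ) * (q.den : ℝ) := by exact_mod_cast hdq
      simp only [hN]
      push_cast
      rw [hd]
      ring
    rw [harg, Real.cos_int_mul_two_pi]
    ring
  have hroot' := conj_transfer p hp θ θ' h1 h2 P hroot
  rw [hev] at hroot'
  have hy : 1 < (1 - θ') / 2 := by linarith
  have := cheb_gt ((1 - θ') / 2) hy N hN1
  linarith

lemma two_cos_sq (t : ℝ) : (2 * Real.cos t) ^ 2 - 2 = 2 * Real.cos (2 * t) := by
  rw [Real.cos_two_mul]; ring

lemma two_cos_cube (t : ℝ) : (2 * Real.cos t) ^ 3 - 3 * (2 * Real.cos t) = 2 * Real.cos (3 * t) := by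
  rw [Real.cos_three_mul]; ring

lemma sum5 : 2 * Real.cos (2 * π / 5) + 2 * Real.cos (4 * π / 5) = -1 := by
  have hs : 0 < Real.sin (π / 5) :=
    Real.sin_pos_of_pos_of_lt_pi (by positivity) (by nlinarith [pi_pos])
  have e1 := Real.sin_add (2 * π / 5) (π / 5)
  rw [show 2 * π / 5 + π / 5 = 3 * π / 5 by ring] at e1
  have e2 := Real.sin_sub (2 * π / 5) (π / 5)
  rw [show 2 * π / 5 - π / 5 = π / 5 by ring] at e2
  have e3 := Real.sin_add (4 * π / 5) (π / 5)
  rw [show 4 * π / 5 + π / 5 = π by ring, Real.sin_pi] at e3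
  have e4 := Real.sin_sub (4 * π / 5) (π / 5)
  rw [show 4 * π / 5 - π / 5 = 3 * π / 5 by ring] at e4
  have key : Real.sin (π / 5) * (2 * Real.cos (2 * π / 5) + 2 * Real.cos (4 * π / 5) + 1) = 0 := by
    linear_combination -e1 + e2 - e3 + e4
  rcases mul_eq_zero.mp key with h | h
  · linarith
  · linarith

lemma sum7 : 2 * Real.cos (2 * π / 7) + 2 * Real.cos (4 * π / 7) + 2 * Real.cos (6 * π / 7) = -1 := by
  have hs : 0 < Real.sin (π / 7) :=
    Real.sin_pos_of_pos_of_lt_pi (by positivity) (by nlinarith [pi_pos])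
  have e1 := Real.sin_add (2 * π / 7) (π / 7)
  rw [show 2 * π / 7 + π / 7 = 3 * π / 7 by ring] at e1
  have e2 := Real.sin_sub (2 * π / 7) (π / 7)
  rw [show 2 * π / 7 - π / 7 = π / 7 by ring] at e2
  have e3 := Real.sin_add (4 * π / 7) (π / 7)
  rw [show 4 * π / 7 + π / 7 = 5 * π / 7 by ring] at e3
  have e4 := Real.sin_sub (4 * π / 7) (π / 7)
  rw [show 4 * π / 7 - π / 7 = 3 * π / 7 by ring] at e4
  have e5 := Real.sin_add (6 * π / 7) (π / 7)
  rw [show 6 * π / 7 + π / 7 = π by ring, Real.sin_pi] at e5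
  have e6 := Real.sin_sub (6 * π / 7) (π / 7)
  rw [show 6 * π / 7 - π / 7 = 5 * π / 7 by ring] at e6
  have key : Real.sin (π / 7) *
      (2 * Real.cos (2 * π / 7) + 2 * Real.cos (4 * π / 7) + 2 * Real.cos (6 * π / 7) + 1) = 0 := by
    linear_combination -e1 + e2 - e3 + e4 - e5 + e6
  rcases mul_eq_zero.mp key with h | h
  · linarith
  · linarith

lemma rat_root_int (a b c : ℤ) (r : ℚ)
    (h : r ^ 3 + (a : ℚ) * r ^ 2 + (b : ℚ) * r + (c : ℚ) = 0) : ∃ m : ℤ, r = (m : ℚ) := by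
  have hden : (r.den : ℚ) ≠ 0 := by exact_mod_cast r.den_nz
  have hdq : (r.num : ℚ) = r * r.den := (div_eq_iff hden).mp (Rat.num_div_den r)
  have key : (r.num : ℤ) ^ 3 + a * r.num ^ 2 * r.den + b * r.num * r.den ^ 2
      + c * r.den ^ 3 = 0 := by
    have : ((r.num : ℤ) ^ 3 + a * r.num ^ 2 * r.den + b * r.num * r.den ^ 2
        + c * r.den ^ 3 : ℤ) = ((0 : ℤ)) := by
      have hq : ((r.num : ℚ)) ^ 3 + a * (r.num : ℚ) ^ 2 * r.den + b * (r.num : ℚ) * (r.den : ℚ) ^ 2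
          + c * (r.den : ℚ) ^ 3 = 0 := by
        rw [hdq]
        linear_combination (r.den : ℚ) ^ 3 * h
      exact_mod_cast hq
    exact this
  have hdvd : (r.den : ℤ) ∣ r.num ^ 3 :=
    ⟨-(a * r.num ^ 2 + b * r.num * r.den + c * r.den ^ 2), by linear_combination key⟩
  have hdvd' : r.den ∣ r.num.natAbs ^ 3 := by
    have := Int.natAbs_dvd_natAbs.mpr hdvd
    simpa [Int.natAbs_pow] using this
  have hco : Nat.Coprime r.den (r.num.natAbs ^ 3) := (r.reduced.symm).pow_right _
  have hd1 : r.den = 1 := hco.eq_one_of_dvd hdvd'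
  refine ⟨r.num, ?_⟩
  rw [← Rat.num_div_den r, hd1]
  simp

lemma roots_zero_of_no_root {p : ℚ[X]} (hne : p ≠ 0) (h : ∀ r : ℚ, ¬ p.IsRoot r) :
    p.roots = 0 := by
  rw [Multiset.eq_zero_iff_forall_notMem]
  intro r hr
  exact h r ((Polynomial.mem_roots hne).mp hr)

lemma irr2 : Irreducible (X ^ 2 - C 2 : ℚ[X]) := by
  have hd : (X ^ 2 - C 2 : ℚ[X]).natDegree = 2 := by compute_degree!
  have hne : (X ^ 2 - C 2 : ℚ[X]) ≠ 0 := fun h => by rw [h] at hd; simp at hd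
  rw [Polynomial.irreducible_iff_roots_eq_zero_of_degree_le_three (by omega) (by omega)]
  apply roots_zero_of_no_root hne
  intro r hr
  have h2 : r ^ 2 = 2 := by
    have := hr
    simp [Polynomial.IsRoot, Polynomial.eval_pow] at this
    linarith [this]
  have hR : ((|r| : ℚ) : ℝ) = Real.sqrt 2 := by
    rw [show ((2:ℝ)) = ((r:ℝ))^2 by exact_mod_cast h2.symm, Real.sqrt_sq_eq_abs]
    push_cast
    rfl
  exact irrational_sqrt_two ⟨|r|, hR⟩

lemma irr5poly : Irreducible (X ^ 2 + X - C 1 : ℚ[X]) := by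
  have hd : (X ^ 2 + X - C 1 : ℚ[X]).natDegree = 2 := by compute_degree!
  have hne : (X ^ 2 + X - C 1 : ℚ[X]) ≠ 0 := fun h => by rw [h] at hd; simp at hd
  rw [Polynomial.irreducible_iff_roots_eq_zero_of_degree_le_three (by omega) (by omega)]
  apply roots_zero_of_no_root hne
  intro r hr
  have h2 : r ^ 2 + r - 1 = 0 := by
    have := hr
    simp [Polynomial.IsRoot] at this
    linarith [this]
  have h5 : ((2 * r + 1) : ℚ) ^ 2 = 5 := by nlinarith [h2]
  have hR : ((|2 * r + 1| : ℚ) : ℝ) = Real.sqrt 5 := by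
    rw [show ((5:ℝ)) = ((2 * r + 1 : ℚ) : ℝ)^2 by exact_mod_cast h5.symm, Real.sqrt_sq_eq_abs]
    push_cast
    rfl
  have hirr : Irrational (Real.sqrt 5) := by
    have : ((5:ℕ):ℝ) = (5:ℝ) := by norm_num
    simpa [this] using (Nat.Prime.irrational_sqrt (by norm_num : Nat.Prime 5))
  exact hirr ⟨|2 * r + 1|, hR⟩

lemma irr7poly : Irreducible (X ^ 3 + X ^ 2 - C 2 * X - C 1 : ℚ[X]) := by
  have hd : (X ^ 3 + X ^ 2 - C 2 * X - C 1 : ℚ[X]).natDegree = 3 := by compute_degree!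
  have hne : (X ^ 3 + X ^ 2 - C 2 * X - C 1 : ℚ[X]) ≠ 0 := fun h => by rw [h] at hd; simp at hd
  rw [Polynomial.irreducible_iff_roots_eq_zero_of_degree_le_three (by omega) (by omega)]
  apply roots_zero_of_no_root hne
  intro r hr
  have h2 : r ^ 3 + r ^ 2 - 2 * r - 1 = 0 := by
    have := hr
    simp [Polynomial.IsRoot] at this
    linarith [this]
  obtain ⟨m, rfl⟩ := rat_root_int 1 (-2) (-1) r (by push_cast; linarith [h2])
  have hm : m ^ 3 + m ^ 2 - 2 * m - 1 = 0 := by exact_mod_cast h2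
  have h1 : -1 ≤ m := by nlinarith [sq_nonneg m, sq_nonneg (m + 1)]
  have h2' : m ≤ 1 := by nlinarith [sq_nonneg m, sq_nonneg (m - 1)]
  interval_cases m <;> omega

lemma irr9poly : Irreducible (X ^ 3 - C 3 * X + C 1 : ℚ[X]) := by
  have hd : (X ^ 3 - C 3 * X + C 1 : ℚ[X]).natDegree = 3 := by compute_degree!
  have hne : (X ^ 3 - C 3 * X + C 1 : ℚ[X]) ≠ 0 := fun h => by rw [h] at hd; simp at hd
  rw [Polynomial.irreducible_iff_roots_eq_zero_of_degree_le_three (by omega) (by omega)]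
  apply roots_zero_of_no_root hne
  intro r hr
  have h2 : r ^ 3 - 3 * r + 1 = 0 := by
    have := hr
    simp [Polynomial.IsRoot] at this
    linarith [this]
  obtain ⟨m, rfl⟩ := rat_root_int 0 (-3) 1 r (by push_cast; linarith [h2])
  have hm : m ^ 3 - 3 * m + 1 = 0 := by exact_mod_cast h2
  have h1 : -1 ≤ m := by nlinarith [sq_nonneg m, sq_nonneg (m + 1), sq_nonneg (m + 2)]
  have h2' : m ≤ 1 := by nlinarith [sq_nonneg m, sq_nonneg (m - 1)]
  interval_cases m <;> omega

lemma cos_two_pi_div_three' : Real.cos (2 * π / 3) = -(1 / 2) := by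
  rw [show 2 * π / 3 = π - π / 3 by ring, Real.cos_pi_sub, Real.cos_pi_div_three]

lemma big_of (x : ℝ) (h1 : 2 * π / 3 < x) (h2 : x ≤ π) : 2 < 1 - 2 * Real.cos x := by
  have h0 : (0:ℝ) ≤ 2 * π / 3 := by positivity
  have := Real.cos_lt_cos_of_nonneg_of_le_pi h0 h2 h1
  rw [cos_two_pi_div_three'] at this
  linarith

lemma aeval_quad (θ : ℝ) : aeval θ (X ^ 2 + X - C 1 : ℚ[X]) = θ ^ 2 + θ - 1 := by
  simp

lemma aeval_sq2 (θ : ℝ) : aeval θ (X ^ 2 - C 2 : ℚ[X]) = θ ^ 2 - 2 := by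
  simp

lemma aeval_cub7 (θ : ℝ) : aeval θ (X ^ 3 + X ^ 2 - C 2 * X - C 1 : ℚ[X])
    = θ ^ 3 + θ ^ 2 - 2 * θ - 1 := by
  simp

lemma aeval_cub9 (θ : ℝ) : aeval θ (X ^ 3 - C 3 * X + C 1 : ℚ[X]) = θ ^ 3 - 3 * θ + 1 := by
  simp

lemma case10 (q : ℚ) (hcos : 2 * Real.cos ((q : ℝ) * π) = 1 - 2 * Real.cos (2 * π / 5)) :
    False := by
  apply niven_master q _ irr5poly (2 * Real.cos (2 * π / 5)) (2 * Real.cos (4 * π / 5)) ?_ ?_ ?_ hcos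
  · rw [aeval_quad]
    have h := two_cos_sq (2 * π / 5)
    rw [show 2 * (2 * π / 5) = 4 * π / 5 by ring] at h
    linarith [sum5, h]
  · rw [aeval_quad]
    have h := two_cos_sq (4 * π / 5)
    rw [show 2 * (4 * π / 5) = 2 * π - 2 * π / 5 by ring, Real.cos_two_pi_sub] at h
    linarith [sum5, h]
  · exact big_of _ (by nlinarith [pi_pos]) (by nlinarith [pi_pos])

lemma case14 (q : ℚ) (hcos : 2 * Real.cos ((q : ℝ) * π) = 1 - 2 * Real.cos (2 * π / 7)) :
    False := by
  apply niven_master q _ irr7poly (2 * Real.cos (2 * π / 7)) (2 * Real.cos (6 * π / 7)) ?_ ?_ ?_ hcos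
  · rw [aeval_cub7]
    have h2 := two_cos_sq (2 * π / 7)
    rw [show 2 * (2 * π / 7) = 4 * π / 7 by ring] at h2
    have h3 := two_cos_cube (2 * π / 7)
    rw [show 3 * (2 * π / 7) = 6 * π / 7 by ring] at h3
    linarith [sum7, h2, h3]
  · rw [aeval_cub7]
    have h2 := two_cos_sq (6 * π / 7)
    rw [show 2 * (6 * π / 7) = 2 * π - 2 * π / 7 by ring, Real.cos_two_pi_sub] at h2
    have h3 := two_cos_cube (6 * π / 7)
    rw [show 3 * (6 * π / 7) = 4 * π / 7 + 2 * π by ring, Real.cos_add_two_pi] at h3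
    linarith [sum7, h2, h3]
  · exact big_of _ (by nlinarith [pi_pos]) (by nlinarith [pi_pos])

lemma case16 (q : ℚ) (hcos : 2 * Real.cos ((q : ℝ) * π) = 1 - 2 * Real.cos (π / 4)) :
    False := by
  apply niven_master q _ irr2 (2 * Real.cos (π / 4)) (2 * Real.cos (3 * π / 4)) ?_ ?_ ?_ hcos
  · rw [aeval_sq2]
    have h := two_cos_sq (π / 4)
    rw [show 2 * (π / 4) = π / 2 by ring, Real.cos_pi_div_two] at h
    linarith [h]
  · rw [aeval_sq2]
    have h := two_cos_sq (3 * π / 4)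
    rw [show 2 * (3 * π / 4) = 2 * π - π / 2 by ring, Real.cos_two_pi_sub, Real.cos_pi_div_two] at h
    linarith [h]
  · exact big_of _ (by nlinarith [pi_pos]) (by nlinarith [pi_pos])

lemma case18 (q : ℚ) (hcos : 2 * Real.cos ((q : ℝ) * π) = 1 - 2 * Real.cos (2 * π / 9)) :
    False := by
  apply niven_master q _ irr9poly (2 * Real.cos (2 * π / 9)) (2 * Real.cos (8 * π / 9)) ?_ ?_ ?_ hcos
  · rw [aeval_cub9]
    have h3 := two_cos_cube (2 * π / 9)
    rw [show 3 * (2 * π / 9) = 2 * π / 3 by ring, cos_two_pi_div_three'] at h3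
    linarith [h3]
  · rw [aeval_cub9]
    have h3 := two_cos_cube (8 * π / 9)
    rw [show 3 * (8 * π / 9) = 2 * π / 3 + 2 * π by ring, Real.cos_add_two_pi,
      cos_two_pi_div_three'] at h3
    linarith [h3]
  · exact big_of _ (by nlinarith [pi_pos]) (by nlinarith [pi_pos])

lemma cos35 : Real.cos (3 * π / 5) = 1 / 2 - Real.cos (π / 5) := by
  have hπ := Real.pi_pos
  have h3 := Real.cos_three_mul (π / 5)
  rw [show 3 * (π / 5) = 3 * π / 5 by ring] at h3
  have hps : Real.cos (3 * π / 5) = -Real.cos (2 * π / 5) := by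
    rw [show 3 * π / 5 = π - 2 * π / 5 by ring, Real.cos_pi_sub]
  have h2 := Real.cos_two_mul (π / 5)
  rw [show 2 * (π / 5) = 2 * π / 5 by ring] at h2
  have hcpos : 0 < Real.cos (π / 5) :=
    Real.cos_pos_of_mem_Ioo ⟨by linarith, by linarith⟩
  have E0 : 4 * Real.cos (π / 5) ^ 3 + 2 * Real.cos (π / 5) ^ 2 - 3 * Real.cos (π / 5) - 1 = 0 := by
    linear_combination -h3 + hps - h2
  have hfac : (Real.cos (π / 5) + 1) * (4 * Real.cos (π / 5) ^ 2 - 2 * Real.cos (π / 5) - 1) = 0 := by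
    linear_combination E0
  have h4 : 4 * Real.cos (π / 5) ^ 2 - 2 * Real.cos (π / 5) - 1 = 0 := by
    rcases mul_eq_zero.mp hfac with h | h
    · linarith
    · exact h
  rw [hps, h2]
  linarith [h4]

set_option maxHeartbeats 2000000 in
theorem stmt_13 (f : ℤ) (α β γ δ : ℝ) (hf : Even f) (hf6 : 6 ≤ f)
    (hgood : goodQuad f α β γ δ) (hE : eqE α β γ δ)
    (h1 : β + 2 * δ = 2 * π) (h2 : 2 * α + 2 * γ = 2 * π) :
    f = 8 ∧ α = π / 3 ∧ β = π ∧ γ = 2 * π / 3 ∧ δ = π / 2 := by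
  obtain ⟨-, -, ⟨qα, hqα⟩, -, -, -, hαm, hβm, hγm, hδm, hsum, hαδ, hβγ,
    hab, hac, had, hbc, hbd, hcd, hiff1, hiff2, hdelta, hall⟩ := hgood
  have hπ := Real.pi_pos
  have hF0 : (0:ℝ) < (f:ℝ) := by exact_mod_cast (show (0:ℤ) < f by omega)
  have hF6 : (6:ℝ) ≤ (f:ℝ) := by exact_mod_cast hf6
  have hγe : γ = π - α := by linarith
  have hα0 : 0 < α := hαm.1
  have hαπ : α < π := by have := hγm.1; linarith
  have hδe : δ = π - 4 * π / (f:ℝ) := by linarith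
  have hβe : β = 8 * π / (f:ℝ) := by
    have h8 : (8:ℝ) * π / (f:ℝ) = 2 * (4 * π / (f:ℝ)) := by ring
    linarith
  have ht0 : 0 < 4 * π / (f:ℝ) := by positivity
  have ht23 : 4 * π / (f:ℝ) ≤ 2 * π / 3 := by
    rw [div_le_iff₀ hF0]; nlinarith
  have hδ0 : 0 < δ := hδm.1
  have hδπ : δ < π := by rw [hδe]; linarith
  -- derive the key equation
  have hsinδ : 0 < Real.sin δ := Real.sin_pos_of_pos_of_lt_pi hδ0 hδπ
  unfold eqE at hE
  have e1 : α - γ / 2 = 3 * (α / 2) - π / 2 := by rw [hγe]; ring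
  have e2 : β / 2 = π - δ := by linarith
  have e3 : γ / 2 = π / 2 - α / 2 := by rw [hγe]; ring
  have e4 : δ - β / 2 = 2 * δ - π := by linarith
  rw [e1, e4, e2, e3, Real.sin_pi_sub, Real.sin_pi_div_two_sub, Real.sin_sub_pi_div_two,
    Real.sin_sub_pi, Real.sin_two_mul] at hE
  have hc : 0 < Real.cos (α / 2) := Real.cos_pos_of_mem_Ioo ⟨by linarith, by linarith⟩
  have h3m := Real.cos_three_mul (α / 2)
  have h2m := Real.cos_two_mul (α / 2)
  rw [show 2 * (α / 2) = α by ring] at h2m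
  have hE2 : (4 * Real.cos (α / 2) ^ 3 - 3 * Real.cos (α / 2)) * Real.sin δ
      = (2 * Real.cos (α / 2) * Real.cos δ) * Real.sin δ := by
    linear_combination -hE - Real.sin δ * h3m
  have hE3 := mul_right_cancel₀ (ne_of_gt hsinδ) hE2
  have hE4 : Real.cos (α / 2) * (4 * Real.cos (α / 2) ^ 2 - 3)
      = Real.cos (α / 2) * (2 * Real.cos δ) := by linear_combination hE3
  have hE5 := mul_left_cancel₀ (ne_of_gt hc) hE4
  have h8 : Real.cos δ = -Real.cos (4 * π / (f:ℝ)) := by rw [hδe, Real.cos_pi_sub]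
  have hkey : Real.cos α = 1 / 2 - Real.cos (4 * π / (f:ℝ)) := by linarith
  clear hE hE2 hE3 hE4 hE5 h3m h2m e1 e2 e3 e4
  obtain ⟨k, hk⟩ := hf
  rcases (show f ≤ 20 ∨ 22 ≤ f by omega) with hle | hge
  · interval_cases f
    -- f = 6
    · rw [show ((6:ℤ):ℝ) = (6:ℝ) by norm_num] at hkey
      rw [show 4 * π / 6 = 2 * π / 3 by ring, cos_two_pi_div_three'] at hkey
      have hz : α = 0 := by
        apply Real.injOn_cos ⟨hα0.le, hαπ.le⟩ ⟨le_refl 0, hπ.le⟩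
        rw [Real.cos_zero]; linarith
      linarith
    · omega
    -- f = 8
    · rw [show ((8:ℤ):ℝ) = (8:ℝ) by norm_num] at hkey hβe hδe
      rw [show 4 * π / 8 = π / 2 by ring, Real.cos_pi_div_two] at hkey
      have hα3 : α = π / 3 := by
        apply Real.injOn_cos ⟨hα0.le, hαπ.le⟩ ⟨by positivity, by linarith⟩
        rw [Real.cos_pi_div_three]; linarith
      refine ⟨rfl, hα3, by rw [hβe]; ring, by rw [hγe, hα3]; ring, by rw [hδe]; ring⟩
    · omega
    -- f = 10
    · rw [show ((10:ℤ):ℝ) = (10:ℝ) by norm_num] at hkey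
      rw [show 4 * π / 10 = 2 * π / 5 by ring] at hkey
      exact (case10 qα (by rw [← hqα]; linarith)).elim
    · omega
    -- f = 12
    · rw [show ((12:ℤ):ℝ) = (12:ℝ) by norm_num] at hkey hβe hδe
      rw [show 4 * π / 12 = π / 3 by ring, Real.cos_pi_div_three] at hkey
      have hβδ : β = δ := by rw [hβe, hδe]; ring
      have := hiff2.mp hβδ
      have hα2 : α = π / 2 := by
        apply Real.injOn_cos ⟨hα0.le, hαπ.le⟩ ⟨by positivity, by linarith⟩
        rw [Real.cos_pi_div_two]; linarith
      rw [hα2] at this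
      linarith
    · omega
    -- f = 14
    · rw [show ((14:ℤ):ℝ) = (14:ℝ) by norm_num] at hkey
      rw [show 4 * π / 14 = 2 * π / 7 by ring] at hkey
      exact (case14 qα (by rw [← hqα]; linarith)).elim
    · omega
    -- f = 16
    · rw [show ((16:ℤ):ℝ) = (16:ℝ) by norm_num] at hkey
      rw [show 4 * π / 16 = π / 4 by ring] at hkey
      exact (case16 qα (by rw [← hqα]; linarith)).elim
    · omega
    -- f = 18
    · rw [show ((18:ℤ):ℝ) = (18:ℝ) by norm_num] at hkey
      rw [show 4 * π / 18 = 2 * π / 9 by ring] at hkey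
      exact (case18 qα (by rw [← hqα]; linarith)).elim
    · omega
    -- f = 20
    · rw [show ((20:ℤ):ℝ) = (20:ℝ) by norm_num] at hkey hβe hδe
      rw [show 4 * π / 20 = π / 5 by ring] at hkey hδe
      have hα35 : α = 3 * π / 5 := by
        apply Real.injOn_cos ⟨hα0.le, hαπ.le⟩ ⟨by positivity, by linarith⟩
        rw [cos35]; linarith
      have hβπ : β < π := by rw [hβe]; nlinarith
      have hγπ : γ < π := by rw [hγe]; linarith
      obtain ⟨-, -, hlt2, -, -⟩ := hall ⟨hαπ, hβπ, hγπ, hδπ⟩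
      rw [hα35, hδe, hγe, hα35] at hlt2
      linarith
  · -- f ≥ 22
    have hF22 : (22:ℝ) ≤ (f:ℝ) := by exact_mod_cast hge
    have hβπ : β < π := by
      rw [hβe, div_lt_iff₀ hF0]; nlinarith
    have hγπ : γ < π := by rw [hγe]; linarith
    obtain ⟨hiffn, -, hlt2, -, -⟩ := hall ⟨hαπ, hβπ, hγπ, hδπ⟩
    have h12 : 12 * π / (f:ℝ) ≤ π := by
      rw [div_le_iff₀ hF0]; nlinarith
    have hnδβ : ¬ δ < β := by
      rw [hδe, hβe]; push_neg
      have he : 8 * π / (f:ℝ) + 4 * π / (f:ℝ) = 12 * π / (f:ℝ) := by ring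
      linarith
    have hαγ : ¬ α < γ := fun hh => hnδβ (hiffn.mpr hh)
    rw [hγe] at hαγ
    push_neg at hαγ
    have hα2 : π / 2 ≤ α := by linarith
    rw [hδe, hγe] at hlt2
    have h4e : 4 * π / (f:ℝ) = 4 * (π / (f:ℝ)) := by ring
    have hu0 : 0 < π / (f:ℝ) := by positivity
    have hule : π / (f:ℝ) ≤ π / 22 := by
      apply div_le_div_of_nonneg_left hπ.le (by norm_num) hF22
    have hπ315 : π < 3.15 := Real.pi_lt_d2
    have hupper : α < π / 2 + 2 * (π / (f:ℝ)) := by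
      rw [h4e] at hlt2; linarith
    have hcosle : Real.cos α ≤ 0 :=
      Real.cos_nonpos_of_pi_div_two_le_of_le hα2 (by linarith)
    have hhalfle : π / 2 + 2 * (π / (f:ℝ)) ≤ π := by linarith
    have hcgt := Real.cos_lt_cos_of_nonneg_of_le_pi (by linarith : (0:ℝ) ≤ α) hhalfle hupper
    have hcpa : Real.cos (π / 2 + 2 * (π / (f:ℝ))) = -Real.sin (2 * (π / (f:ℝ))) := by
      rw [Real.cos_add, Real.cos_pi_div_two, Real.sin_pi_div_two]; ring
    rw [hcpa] at hcgt
    have hsinle : Real.sin (2 * (π / (f:ℝ))) ≤ 2 * (π / (f:ℝ)) := Real.sin_le (by positivity)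
    have hcos4 : 1 - (4 * (π / (f:ℝ))) ^ 2 / 2 ≤ Real.cos (4 * (π / (f:ℝ))) :=
      Real.one_sub_sq_div_two_le_cos
    rw [h4e] at hkey
    exfalso
    nlinarith [hu0, hule, hcgt, hsinle, hcos4, hkey, hπ315,
      mul_le_mul_of_nonneg_left hule hu0.le]
end

section
/- There is no even integer f ≥ 6 and good rational quadruple (α, β, γ, δ) for f satisfying equation (E) together with 2α + β = 2π and 3β = 2π. -/
open Real

/-- Key trigonometric identity. -/
lemma key_identity (u t : ℝ) :
    2 * (Real.sin (π/3 - u) * Real.sin (π/3)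
        - Real.sin (u + π/3) * Real.sin (2*t - 2*u - π/3)) =
    4 * Real.sin u ^ 2 * Real.cos u
      + 4 * Real.sin (u + π/3) * Real.cos (2*u - t) * Real.sin (π/3 - t) := by
  have h3 : Real.sqrt 3 ^ 2 = 3 := Real.sq_sqrt (by norm_num)
  have hu : Real.sin u ^ 2 + Real.cos u ^ 2 = 1 := Real.sin_sq_add_cos_sq u
  have ht : Real.sin t ^ 2 + Real.cos t ^ 2 = 1 := Real.sin_sq_add_cos_sq t
  simp only [Real.sin_sub, Real.sin_add, Real.cos_sub, Real.cos_add,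
    Real.sin_two_mul, Real.cos_two_mul, Real.sin_pi_div_three, Real.cos_pi_div_three]
  linear_combination (Real.cos u - Real.cos u ^ 3) * h3
    + (-5 * Real.cos u + 2 * Real.cos u * Real.cos t ^ 2
        + 2 * Real.cos u * Real.sin t ^ 2) * hu
    + (2 * Real.cos u - 2 * Real.cos u ^ 3
        + 2 * Real.sqrt 3 * Real.sin u * Real.cos u ^ 2) * ht

theorem stmt_15 :
    ¬ ∃ (f : ℤ) (α β γ δ : ℝ), Even f ∧ 6 ≤ f ∧ goodQuad f α β γ δ ∧
      eqE α β γ δ ∧ 2 * α + β = 2 * π ∧ 3 * β = 2 * π := by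
  rintro ⟨f, α, β, γ, δ, -, hf6, hgood, hEE, h2ab, h3b⟩
  obtain ⟨-, -, -, -, -, -, hαI, hβI, hγI, hδI, hsum, -, hβγ, -⟩ := hgood
  obtain ⟨hγ0, hγ2⟩ := Set.mem_Ioo.mp hγI
  obtain ⟨hδ0, hδ2⟩ := Set.mem_Ioo.mp hδI
  have hπ : (0:ℝ) < π := Real.pi_pos
  have hβv : β = 2*π/3 := by linarith
  have hαv : α = 2*π/3 := by linarith
  have hfR : (6:ℝ) ≤ (f:ℝ) := by exact_mod_cast hf6
  have hf0 : (0:ℝ) < (f:ℝ) := by linarith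
  set t : ℝ := 2*π/(f:ℝ) with htdef
  have ht0 : 0 < t := by positivity
  have ht3 : t ≤ π/3 := by
    rw [htdef, div_le_iff₀ hf0]; nlinarith
  set u : ℝ := γ/2 - π/3 with hudef
  have hu1 : -(π/3) < u := by rw [hudef]; linarith
  have h4f : 4*π/(f:ℝ) = 2*t := by rw [htdef]; ring
  have hδv : δ = 2*t - 2*u := by rw [hudef]; linarith
  have hu2 : u < t := by linarith
  have hune : u ≠ 0 := by
    intro h
    apply hβγ
    have : γ = 2*π/3 := by
      have := hudef
      rw [h] at this
      linarith
    linarith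
  clear_value t u
  have hE : Real.sin (α - γ/2) * Real.sin (β/2)
      = Real.sin (γ/2) * Real.sin (δ - β/2) := hEE
  rw [show α - γ/2 = π/3 - u by rw [hudef]; linarith,
      show δ - β/2 = 2*t - 2*u - π/3 by rw [hδv]; linarith,
      show β/2 = π/3 by linarith,
      show γ/2 = u + π/3 by rw [hudef]; ring] at hE
  have hkey := key_identity u t
  rcases le_or_gt (-(π/2)) (2*u - t) with hcase | hcase
  · -- cos (2u - t) ≥ 0 case
    have hcu : 0 < Real.cos u :=
      Real.cos_pos_of_mem_Ioo (Set.mem_Ioo.mpr ⟨by linarith, by linarith⟩)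
    have hsu3 : 0 < Real.sin (u + π/3) :=
      Real.sin_pos_of_pos_of_lt_pi (by linarith) (by linarith)
    have hc2 : 0 ≤ Real.cos (2*u - t) :=
      Real.cos_nonneg_of_mem_Icc (Set.mem_Icc.mpr ⟨by linarith, by linarith⟩)
    have hs3t : 0 ≤ Real.sin (π/3 - t) :=
      Real.sin_nonneg_of_nonneg_of_le_pi (by linarith) (by linarith)
    have h1 : 0 ≤ Real.sin u ^ 2 * Real.cos u := mul_nonneg (sq_nonneg _) hcu.le
    have h2 : 0 ≤ Real.sin (u + π/3) * Real.cos (2*u - t) * Real.sin (π/3 - t) :=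
      mul_nonneg (mul_nonneg hsu3.le hc2) hs3t
    rw [hE] at hkey
    have hA : Real.sin u ^ 2 * Real.cos u = 0 := by linarith [hkey, h1, h2]
    rcases mul_eq_zero.mp hA with h | h
    · have hsin0 : Real.sin u = 0 := by
        have := sq_eq_zero_iff.mp h
        exact this
      have : u = 0 := (Real.sin_eq_zero_iff_of_lt_of_lt (by linarith) (by linarith)).mp hsin0
      exact hune this
    · exact hcu.ne' h
  · -- cos (2u - t) possibly negative: u < -π/12
    have hu12 : u < -(π/12) := by linarith
    have hs1 : 0 < Real.sin (u + π/3) :=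
      Real.sin_pos_of_pos_of_lt_pi (by linarith) (by linarith)
    have hs2 : Real.sin (u + π/3) < Real.sqrt 2 / 2 := by
      have h := Real.sin_lt_sin_of_lt_of_le_pi_div_two
        (x := u + π/3) (y := π/4) (by linarith) (by linarith) (by linarith)
      rwa [Real.sin_pi_div_four] at h
    have hs3 : Real.sin (2*t - 2*u - π/3) ≤ 1 := Real.sin_le_one _
    have hs4 : Real.sqrt 3 / 2 < Real.sin (π/3 - u) := by
      have hrw : Real.sin (π/3 - u) = Real.cos (π/6 + u) := by
        rw [← Real.cos_pi_div_two_sub]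
        congr 1
        ring
      rw [hrw, ← Real.cos_pi_div_six, ← Real.cos_abs (π/6 + u)]
      exact Real.cos_lt_cos_of_nonneg_of_le_pi (abs_nonneg _) (by linarith)
        (abs_lt.mpr ⟨by linarith, by linarith⟩)
    have hsq2 : Real.sqrt 2 ^ 2 = 2 := Real.sq_sqrt (by norm_num)
    have hsq2n : 0 ≤ Real.sqrt 2 := Real.sqrt_nonneg 2
    have hsqrt2 : Real.sqrt 2 < 3/2 :=
      (Real.sqrt_lt' (by norm_num)).mpr (by norm_num)
    have hsq3 : Real.sqrt 3 ^ 2 = 3 := Real.sq_sqrt (by norm_num)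
    have hsq3n : 0 ≤ Real.sqrt 3 := Real.sqrt_nonneg 3
    rw [Real.sin_pi_div_three] at hE
    have hL : 3/4 < Real.sin (π/3 - u) * (Real.sqrt 3 / 2) := by
      have hm := mul_lt_mul_of_pos_right hs4
        (show (0:ℝ) < Real.sqrt 3 / 2 by positivity)
      linarith [hm, hsq3]
    have hR : Real.sin (u + π/3) * Real.sin (2*t - 2*u - π/3) < 3/4 := by
      have hmul : Real.sin (u + π/3) * Real.sin (2*t - 2*u - π/3)
          ≤ Real.sin (u + π/3) * 1 := mul_le_mul_of_nonneg_left hs3 hs1.le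
      linarith [hmul, hs2, hsqrt2]
    linarith
end

section
/- No root of unity is a root of the polynomial 25y⁸ + 998y⁶ + 1923y⁴ + 998y² + 25, and no root of unity is a root of the polynomial 11y⁸ + 6y⁷ − 1217y⁶ − 4182y⁵ − 5112y⁴ − 4182y³ − 1217y² + 6y + 11. -/
open Polynomial

noncomputable def R1p : ℤ[X] := C 25 * X^2 + C 998 * X + C 1873

theorem part1 : ∀ y : ℂ, (∃ n : ℕ, 0 < n ∧ y ^ n = 1) →
      25 * y ^ 8 + 998 * y ^ 6 + 1923 * y ^ 4 + 998 * y ^ 2 + 25 ≠ 0 := by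
  rintro y ⟨n, hn, hyn⟩ hP
  have hy0 : y ≠ 0 := by
    intro h; rw [h, zero_pow hn.ne'] at hyn; exact zero_ne_one hyn
  have hyi : IsIntegral ℤ y :=
    ⟨X^n - C 1, monic_X_pow_sub_C 1 hn.ne', by simp [hyn]⟩
  have hinv : y ^ (n-1) = y⁻¹ := by
    refine eq_inv_of_mul_eq_one_left ?_
    rw [← pow_succ, Nat.sub_add_cancel hn]; exact hyn
  set t : ℂ := y^2 + (y^(n-1))^2 with ht
  have hti : IsIntegral ℤ t := (hyi.pow 2).add ((hyi.pow (n-1)).pow 2)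
  have ht' : t = y^2 + (y^2)⁻¹ := by rw [ht, hinv, inv_pow]
  have ht0 : 25*t^2 + 998*t + 1873 = 0 := by
    have h4 : y^4 ≠ 0 := pow_ne_zero _ hy0
    have hyy : y^2 * (y^2)⁻¹ = 1 := mul_inv_cancel₀ (pow_ne_zero _ hy0)
    have key : (25*t^2 + 998*t + 1873) * y^4 = 0 := by
      rw [ht']
      linear_combination hP + (50*y^4 + 25*(y^2*(y^2)⁻¹) + 25 + 998*y^2) * hyy
    rcases mul_eq_zero.1 key with h|h
    · exact h
    · exact absurd h h4
  have habs : ‖y‖ = 1 := Complex.norm_eq_one_of_pow_eq_one hyn hn.ne'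
  have hc2 : (starRingEnd ℂ) (y^2) = (y^2)⁻¹ := by
    refine eq_inv_of_mul_eq_one_left ?_
    rw [← Complex.normSq_eq_conj_mul_self, Complex.normSq_eq_norm_sq, norm_pow, habs]
    norm_num
  set tr : ℝ := 2 * (y^2).re with htr
  have htreq : t = (tr : ℂ) := by
    rw [ht', ← hc2, Complex.add_conj, htr]
  have htrb : |tr| ≤ 2 := by
    rw [htr, abs_mul]
    have h1 : |(y^2).re| ≤ ‖y^2‖ := Complex.abs_re_le_norm _
    have h2 : ‖y^2‖ = 1 := by rw [norm_pow, habs]; norm_num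
    rw [h2] at h1
    rw [abs_two]
    nlinarith [h1]
  set M := minpoly ℤ t with hMdef
  have hMmonic : M.Monic := minpoly.monic hti
  have haev : aeval t R1p = 0 := by
    simp only [R1p, map_add, map_mul, map_pow, map_intCast, aeval_X, aeval_C,
      algebraMap_int_eq, eq_intCast]
    push_cast
    linear_combination ht0
  have hdvd : M ∣ R1p := minpoly.isIntegrallyClosed_dvd hti haev
  obtain ⟨Cq, hfac⟩ := hdvd
  have hR1deg : R1p.natDegree = 2 := by unfold R1p; compute_degree!
  have hR1ne : R1p ≠ 0 := fun h => by simp [h] at hR1deg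
  have hCq0 : Cq ≠ 0 := fun h => hR1ne (by rw [hfac, h, mul_zero])
  have hM0 : M ≠ 0 := hMmonic.ne_zero
  have hdegs : M.natDegree + Cq.natDegree = 2 := by
    rw [← Polynomial.natDegree_mul hM0 hCq0, ← hfac, hR1deg]
  have hMpos : 0 < M.natDegree := minpoly.natDegree_pos hti
  have hlcR1 : R1p.leadingCoeff = 25 := by
    rw [Polynomial.leadingCoeff, hR1deg]
    simp [R1p, coeff_C, coeff_X, coeff_X_pow, coeff_C_mul]
  rcases (by omega : M.natDegree = 1 ∨ M.natDegree = 2) with hd | hd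
  · -- degree 1 : t = -m0 with m0 integer
    have hMX : M = X + C (M.coeff 0) := hMmonic.eq_X_add_C hd
    set m0 := M.coeff 0 with hm0
    have haevM : aeval t M = 0 := minpoly.aeval ℤ t
    rw [hMX] at haevM
    simp only [map_add, map_intCast, aeval_X, aeval_C, algebraMap_int_eq, eq_intCast] at haevM
    have htm : t = -(m0 : ℂ) := by linear_combination haevM
    have htrm : tr = -(m0 : ℝ) := by
      have : ((tr:ℝ) : ℂ) = ((-(m0:ℝ) : ℝ) : ℂ) := by
        rw [← htreq, htm]; push_cast; ring
      exact_mod_cast this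
    have hb : -2 ≤ m0 ∧ m0 ≤ 2 := by
      rw [abs_le, htrm] at htrb
      constructor <;> [exact_mod_cast neg_le_of_neg_le htrb.2; exact_mod_cast le_of_neg_le_neg htrb.1]
    have hz : (25*m0^2 - 998*m0 + 1873 : ℤ) = 0 := by
      have h := ht0
      rw [htm] at h
      have : ((25*m0^2 - 998*m0 + 1873 : ℤ) : ℂ) = 0 := by push_cast; linear_combination h
      exact_mod_cast this
    obtain ⟨h1, h2⟩ := hb
    interval_cases m0 <;> omega
  · -- degree 2 : Cq is a constant = 25
    have hCdeg : Cq.natDegree = 0 := by omega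
    obtain ⟨c, hc⟩ := Polynomial.natDegree_eq_zero.mp hCdeg
    have hlc : c = 25 := by
      have h := hlcR1
      rw [hfac, leadingCoeff_mul, hMmonic.leadingCoeff, one_mul, ← hc, leadingCoeff_C] at h
      exact h
    have hev0 : (1873:ℤ) = M.eval 0 * 25 := by
      have h := congrArg (Polynomial.eval 0) hfac
      rw [← hc, hlc] at h
      simpa [R1p] using h
    omega



noncomputable def R2p : ℤ[X] := C 11 * X^4 + C 6 * X^3 - C 1261 * X^2 - C 4200 * X - C 2656

lemma R2bound (x : ℝ) (h : 11*x^4 + 6*x^3 - 1261*x^2 - 4200*x - 2656 = 0) : |x| ≤ 12 := by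
  rw [abs_le]
  constructor
  · by_contra hc; push_neg at hc
    nlinarith [sq_nonneg (x + 12), sq_nonneg (x^2 - 144), sq_nonneg (x^2 + 12*x), sq_nonneg x]
  · by_contra hc; push_neg at hc
    nlinarith [sq_nonneg (x - 12), sq_nonneg (x^2 - 144), sq_nonneg (x^2 - 12*x), sq_nonneg x]

set_option maxRecDepth 40000 in
lemma elimD2 : ∀ m0 ∈ Finset.Icc (-24:ℤ) 24, ∀ m1 ∈ Finset.Icc (-14:ℤ) 14,
    ¬ ((m0 ∣ 2656) ∧ (1 + m1 + m0 ∣ 8100) ∧ (1 - m1 + m0 ∣ 288) ∧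
       (4 + 2*m1 + m0 ∣ 15876) ∧ (4 - 2*m1 + m0 ∣ 828) ∧
       (9 + 3*m1 + m0 ∣ 25552) ∧ (9 - 3*m1 + m0 ∣ 676) ∧
       (16 + 4*m1 + m0 ∣ 36432) ∧ (16 - 4*m1 + m0 ∣ 3600) ∧
       (25 + 5*m1 + m0 ∣ 47556) ∧ (25 - 5*m1 + m0 ∣ 7056) ∧
       (36 + 6*m1 + m0 ∣ 57700) ∧ (36 - 6*m1 + m0 ∣ 9892)) := by decide

set_option maxRecDepth 40000 in
lemma elimD3 : ∀ c0 ∈ Finset.Icc (-132:ℤ) 132,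
    ¬ ((c0 ∣ 2656) ∧ (11 + c0 ∣ 8100) ∧ (-11 + c0 ∣ 288) ∧
       (22 + c0 ∣ 15876) ∧ (-22 + c0 ∣ 828) ∧
       (33 + c0 ∣ 25552) ∧ (-33 + c0 ∣ 676)) := by decide

lemma quadEval {A : Type*} [CommRing A] (M : ℤ[X]) (h2 : M.coeff 2 = 1)
    (hd : M.natDegree = 2) (x : A) :
    aeval x M = (M.coeff 0 : A) + (M.coeff 1 : A) * x + x^2 := by
  rw [aeval_eq_sum_range, hd, Finset.sum_range_succ, Finset.sum_range_succ,
    Finset.sum_range_one, h2]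
  simp [zsmul_eq_mul]

theorem part2 : ∀ y : ℂ, (∃ n : ℕ, 0 < n ∧ y ^ n = 1) →
      11 * y ^ 8 + 6 * y ^ 7 - 1217 * y ^ 6 - 4182 * y ^ 5 - 5112 * y ^ 4 -
        4182 * y ^ 3 - 1217 * y ^ 2 + 6 * y + 11 ≠ 0 := by
  rintro y ⟨n, hn, hyn⟩ hQ
  have hy0 : y ≠ 0 := by
    intro h; rw [h, zero_pow hn.ne'] at hyn; exact zero_ne_one hyn
  have hyi : IsIntegral ℤ y :=
    ⟨X^n - C 1, monic_X_pow_sub_C 1 hn.ne', by simp [hyn]⟩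
  have hinv : y ^ (n-1) = y⁻¹ := by
    refine eq_inv_of_mul_eq_one_left ?_
    rw [← pow_succ, Nat.sub_add_cancel hn]; exact hyn
  set s : ℂ := y + y^(n-1) with hs
  have hsi : IsIntegral ℤ s := hyi.add (hyi.pow (n-1))
  have hs' : s = y + y⁻¹ := by rw [hs, hinv]
  have hs0 : 11*s^4 + 6*s^3 - 1261*s^2 - 4200*s - 2656 = 0 := by
    have h4 : y^4 ≠ 0 := pow_ne_zero _ hy0
    have hyy : y * y⁻¹ = 1 := mul_inv_cancel₀ hy0
    have key : (11*s^4 + 6*s^3 - 1261*s^2 - 4200*s - 2656) * y^4 = 0 := by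
      rw [hs']
      linear_combination hQ +
        (44*y^6 + 66*y^4*(y*y⁻¹ + 1) + 44*y^2*((y*y⁻¹)^2 + y*y⁻¹ + 1) +
         11*((y*y⁻¹)^3 + (y*y⁻¹)^2 + y*y⁻¹ + 1) + 18*y^5 + 18*y^3*(y*y⁻¹ + 1) +
         6*y*((y*y⁻¹)^2 + y*y⁻¹ + 1) - 2522*y^4 - 1261*y^2*(y*y⁻¹ + 1) - 4200*y^3) * hyy
    rcases mul_eq_zero.1 key with h|h
    · exact h
    · exact absurd h h4
  have habs : ‖y‖ = 1 := Complex.norm_eq_one_of_pow_eq_one hyn hn.ne'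
  have hc2 : (starRingEnd ℂ) y = y⁻¹ := by
    refine eq_inv_of_mul_eq_one_left ?_
    rw [← Complex.normSq_eq_conj_mul_self, Complex.normSq_eq_norm_sq, habs]
    norm_num
  set sr : ℝ := 2 * y.re with hsr
  have hsreq : s = (sr : ℂ) := by rw [hs', ← hc2, Complex.add_conj, hsr]
  have hsrb : |sr| ≤ 2 := by
    rw [hsr, abs_mul, abs_two]
    nlinarith [Complex.abs_re_le_norm y, habs.le, habs.ge]
  -- real version of the quartic equation for sr
  have hsr0 : 11*sr^4 + 6*sr^3 - 1261*sr^2 - 4200*sr - 2656 = 0 := by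
    have h := hs0
    rw [hsreq] at h
    exact_mod_cast (by push_cast; linear_combination h :
      ((11*sr^4 + 6*sr^3 - 1261*sr^2 - 4200*sr - 2656 : ℝ) : ℂ) = 0)
  set M := minpoly ℤ s with hMdef
  have hMmonic : M.Monic := minpoly.monic hsi
  have haev : aeval s R2p = 0 := by
    simp only [R2p, map_add, map_sub, map_mul, map_pow, map_intCast, aeval_X, aeval_C,
      algebraMap_int_eq, eq_intCast]
    push_cast
    linear_combination hs0
  have hdvd : M ∣ R2p := minpoly.isIntegrallyClosed_dvd hsi haev
  obtain ⟨Cq, hfac⟩ := hdvd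
  have hRdeg : R2p.natDegree = 4 := by unfold R2p; compute_degree!
  have hRne : R2p ≠ 0 := fun h => by simp [h] at hRdeg
  have hCq0 : Cq ≠ 0 := fun h => hRne (by rw [hfac, h, mul_zero])
  have hM0 : M ≠ 0 := hMmonic.ne_zero
  have hdegs : M.natDegree + Cq.natDegree = 4 := by
    rw [← Polynomial.natDegree_mul hM0 hCq0, ← hfac, hRdeg]
  have hMpos : 0 < M.natDegree := minpoly.natDegree_pos hsi
  have hlcR : R2p.leadingCoeff = 11 := by
    rw [Polynomial.leadingCoeff, hRdeg]
    simp [R2p, coeff_C, coeff_X, coeff_X_pow, coeff_C_mul]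
  -- evaluation of R2p at integers
  have hRval : ∀ k : ℤ, aeval k R2p = 11*k^4 + 6*k^3 - 1261*k^2 - 4200*k - 2656 := by
    intro k
    simp only [R2p, map_add, map_sub, map_mul, map_pow, map_intCast, aeval_X, aeval_C,
      algebraMap_int_eq, eq_intCast, Int.cast_id]
  rcases (by omega : M.natDegree = 1 ∨ M.natDegree = 2 ∨ M.natDegree = 3 ∨ M.natDegree = 4)
    with hd | hd | hd | hd
  · -- degree 1
    have hMX : M = X + C (M.coeff 0) := hMmonic.eq_X_add_C hd
    set m0 := M.coeff 0 with hm0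
    have haevM : aeval s M = 0 := minpoly.aeval ℤ s
    rw [hMX] at haevM
    simp only [map_add, map_intCast, aeval_X, aeval_C, algebraMap_int_eq, eq_intCast] at haevM
    have htm : s = -(m0 : ℂ) := by linear_combination haevM
    have htrm : sr = -(m0 : ℝ) := by
      have : ((sr:ℝ) : ℂ) = ((-(m0:ℝ) : ℝ) : ℂ) := by rw [← hsreq, htm]; push_cast; ring
      exact_mod_cast this
    have hb : -2 ≤ m0 ∧ m0 ≤ 2 := by
      rw [abs_le, htrm] at hsrb
      constructor <;> [exact_mod_cast neg_le_of_neg_le hsrb.2; exact_mod_cast le_of_neg_le_neg hsrb.1]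
    have hz : (11*m0^4 - 6*m0^3 - 1261*m0^2 + 4200*m0 - 2656 : ℤ) = 0 := by
      have h := hs0
      rw [htm] at h
      have : ((11*m0^4 - 6*m0^3 - 1261*m0^2 + 4200*m0 - 2656 : ℤ) : ℂ) = 0 := by
        push_cast; linear_combination h
      exact_mod_cast this
    obtain ⟨h1, h2⟩ := hb
    interval_cases m0 <;> omega
  · -- degree 2
    set m0 := M.coeff 0 with hm0
    set m1 := M.coeff 1 with hm1
    have h2c : M.coeff 2 = 1 := by rw [← hd]; exact hMmonic.coeff_natDegree
    have haevM : aeval s M = 0 := minpoly.aeval ℤ s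
    rw [quadEval M h2c hd] at haevM
    rw [hsreq] at haevM
    have hr : (m0:ℝ) + (m1:ℝ) * sr + sr^2 = 0 := by
      exact_mod_cast (by push_cast; linear_combination haevM :
        (((m0:ℝ) + (m1:ℝ) * sr + sr^2 : ℝ) : ℂ) = 0)
    set s2 : ℝ := -(m1:ℝ) - sr with hs2
    have hr2 : (m0:ℝ) + (m1:ℝ) * s2 + s2^2 = 0 := by
      rw [hs2]; linear_combination hr
    have haevM2 : aeval s2 M = 0 := by
      rw [quadEval M h2c hd]; exact hr2
    have hR2s2 : 11*s2^4 + 6*s2^3 - 1261*s2^2 - 4200*s2 - 2656 = 0 := by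
      have h : aeval s2 R2p = 0 := by rw [hfac, map_mul, haevM2, zero_mul]
      simp only [R2p, map_add, map_sub, map_mul, map_pow, map_intCast, aeval_X, aeval_C,
        algebraMap_int_eq, eq_intCast] at h
      push_cast at h
      linear_combination h
    have hs2b : |s2| ≤ 12 := R2bound s2 hR2s2
    -- bounds on m1 m0
    have hm1b : |(m1:ℝ)| ≤ 14 := by
      have : (m1:ℝ) = -sr - s2 := by rw [hs2]; ring
      rw [this, show -sr - s2 = -(sr + s2) by ring, abs_neg]
      calc |sr + s2| ≤ |sr| + |s2| := abs_add_le sr s2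
        _ ≤ 14 := by linarith
    have hm0b : |(m0:ℝ)| ≤ 24 := by
      have he : (m0:ℝ) = sr * s2 := by rw [hs2]; linear_combination hr
      rw [he, abs_mul]
      nlinarith [abs_nonneg sr, abs_nonneg s2]
    have hm1i : m1 ∈ Finset.Icc (-14:ℤ) 14 := by
      rw [Finset.mem_Icc]
      rw [abs_le] at hm1b
      exact ⟨by exact_mod_cast hm1b.1, by exact_mod_cast hm1b.2⟩
    have hm0i : m0 ∈ Finset.Icc (-24:ℤ) 24 := by
      rw [Finset.mem_Icc]
      rw [abs_le] at hm0b
      exact ⟨by exact_mod_cast hm0b.1, by exact_mod_cast hm0b.2⟩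
    -- divisibility conditions
    have hDk : ∀ k : ℤ, (m0 + m1*k + k^2) ∣ (11*k^4 + 6*k^3 - 1261*k^2 - 4200*k - 2656) := by
      intro k
      refine ⟨aeval k Cq, ?_⟩
      rw [← hRval k, hfac, map_mul, quadEval M h2c hd]
      simp [Int.cast_id]
      left; rfl
    refine elimD2 m0 hm0i m1 hm1i ⟨?_, ?_, ?_, ?_, ?_, ?_, ?_, ?_, ?_, ?_, ?_, ?_, ?_⟩
    · have := hDk 0; rw [show (m0 + m1*0 + 0^2 : ℤ) = m0 by ring] at this
      rw [show (11*0^4 + 6*0^3 - 1261*0^2 - 4200*0 - 2656 : ℤ) = -2656 by norm_num] at this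
      exact (dvd_neg).mp this
    · have := hDk 1; rw [show (m0 + m1*1 + 1^2 : ℤ) = 1 + m1 + m0 by ring] at this
      rw [show (11*1^4 + 6*1^3 - 1261*1^2 - 4200*1 - 2656 : ℤ) = -8100 by norm_num] at this
      exact (dvd_neg).mp this
    · have := hDk (-1); rw [show (m0 + m1*(-1) + (-1)^2 : ℤ) = 1 - m1 + m0 by ring] at this
      rw [show (11*(-1)^4 + 6*(-1)^3 - 1261*(-1)^2 - 4200*(-1) - 2656 : ℤ) = 288 by norm_num] at this
      exact this
    · have := hDk 2; rw [show (m0 + m1*2 + 2^2 : ℤ) = 4 + 2*m1 + m0 by ring] at this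
      rw [show (11*2^4 + 6*2^3 - 1261*2^2 - 4200*2 - 2656 : ℤ) = -15876 by norm_num] at this
      exact (dvd_neg).mp this
    · have := hDk (-2); rw [show (m0 + m1*(-2) + (-2)^2 : ℤ) = 4 - 2*m1 + m0 by ring] at this
      rw [show (11*(-2)^4 + 6*(-2)^3 - 1261*(-2)^2 - 4200*(-2) - 2656 : ℤ) = 828 by norm_num] at this
      exact this
    · have := hDk 3; rw [show (m0 + m1*3 + 3^2 : ℤ) = 9 + 3*m1 + m0 by ring] at this
      rw [show (11*3^4 + 6*3^3 - 1261*3^2 - 4200*3 - 2656 : ℤ) = -25552 by norm_num] at this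
      exact (dvd_neg).mp this
    · have := hDk (-3); rw [show (m0 + m1*(-3) + (-3)^2 : ℤ) = 9 - 3*m1 + m0 by ring] at this
      rw [show (11*(-3)^4 + 6*(-3)^3 - 1261*(-3)^2 - 4200*(-3) - 2656 : ℤ) = -676 by norm_num] at this
      exact (dvd_neg).mp this
    · have := hDk 4; rw [show (m0 + m1*4 + 4^2 : ℤ) = 16 + 4*m1 + m0 by ring] at this
      rw [show (11*4^4 + 6*4^3 - 1261*4^2 - 4200*4 - 2656 : ℤ) = -36432 by norm_num] at this
      exact (dvd_neg).mp this
    · have := hDk (-4); rw [show (m0 + m1*(-4) + (-4)^2 : ℤ) = 16 - 4*m1 + m0 by ring] at this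
      rw [show (11*(-4)^4 + 6*(-4)^3 - 1261*(-4)^2 - 4200*(-4) - 2656 : ℤ) = -3600 by norm_num] at this
      exact (dvd_neg).mp this
    · have := hDk 5; rw [show (m0 + m1*5 + 5^2 : ℤ) = 25 + 5*m1 + m0 by ring] at this
      rw [show (11*5^4 + 6*5^3 - 1261*5^2 - 4200*5 - 2656 : ℤ) = -47556 by norm_num] at this
      exact (dvd_neg).mp this
    · have := hDk (-5); rw [show (m0 + m1*(-5) + (-5)^2 : ℤ) = 25 - 5*m1 + m0 by ring] at this
      rw [show (11*(-5)^4 + 6*(-5)^3 - 1261*(-5)^2 - 4200*(-5) - 2656 : ℤ) = -7056 by norm_num] at this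
      exact (dvd_neg).mp this
    · have := hDk 6; rw [show (m0 + m1*6 + 6^2 : ℤ) = 36 + 6*m1 + m0 by ring] at this
      rw [show (11*6^4 + 6*6^3 - 1261*6^2 - 4200*6 - 2656 : ℤ) = -57700 by norm_num] at this
      exact (dvd_neg).mp this
    · have := hDk (-6); rw [show (m0 + m1*(-6) + (-6)^2 : ℤ) = 36 - 6*m1 + m0 by ring] at this
      rw [show (11*(-6)^4 + 6*(-6)^3 - 1261*(-6)^2 - 4200*(-6) - 2656 : ℤ) = -9892 by norm_num] at this
      exact (dvd_neg).mp this
  · -- degree 3 : Cq linear with leading coefficient 11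
    have hCdeg : Cq.natDegree = 1 := by omega
    have hCX : Cq = C (Cq.coeff 1) * X + C (Cq.coeff 0) :=
      eq_X_add_C_of_natDegree_le_one hCdeg.le
    set c0 := Cq.coeff 0 with hc0
    have hc1 : Cq.coeff 1 = 11 := by
      have h := hlcR
      rw [hfac, leadingCoeff_mul, hMmonic.leadingCoeff, one_mul, Polynomial.leadingCoeff,
        hCdeg] at h
      exact h
    rw [hc1] at hCX
    set x0 : ℝ := -(c0:ℝ)/11 with hx0
    have haevC : aeval x0 Cq = 0 := by
      rw [hCX]
      simp only [map_add, map_mul, map_intCast, aeval_X, aeval_C, algebraMap_int_eq, eq_intCast]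
      push_cast
      rw [hx0]; ring
    have hR2x0 : 11*x0^4 + 6*x0^3 - 1261*x0^2 - 4200*x0 - 2656 = 0 := by
      have h : aeval x0 R2p = 0 := by rw [hfac, map_mul, haevC, mul_zero]
      simp only [R2p, map_add, map_sub, map_mul, map_pow, map_intCast, aeval_X, aeval_C,
        algebraMap_int_eq, eq_intCast] at h
      push_cast at h
      linear_combination h
    have hx0b : |x0| ≤ 12 := R2bound x0 hR2x0
    have hc0b : |(c0:ℝ)| ≤ 132 := by
      rw [hx0, abs_div] at hx0b
      rw [abs_neg] at hx0b
      have : |(11:ℝ)| = 11 := by norm_num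
      rw [this] at hx0b
      linarith [(div_le_iff₀ (by norm_num : (0:ℝ) < 11)).mp hx0b]
    have hc0i : c0 ∈ Finset.Icc (-132:ℤ) 132 := by
      rw [Finset.mem_Icc]
      rw [abs_le] at hc0b
      exact ⟨by exact_mod_cast hc0b.1, by exact_mod_cast hc0b.2⟩
    have hDk : ∀ k : ℤ, (11*k + c0) ∣ (11*k^4 + 6*k^3 - 1261*k^2 - 4200*k - 2656) := by
      intro k
      refine ⟨aeval k M, ?_⟩
      rw [← hRval k, hfac, map_mul, hCX]
      simp only [map_add, map_mul, map_intCast, aeval_X, aeval_C, algebraMap_int_eq,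
        eq_intCast, Int.cast_id]
      ring
    refine elimD3 c0 hc0i ⟨?_, ?_, ?_, ?_, ?_, ?_, ?_⟩
    · have := hDk 0; rw [show (11*0 + c0 : ℤ) = c0 by ring] at this
      rw [show (11*0^4 + 6*0^3 - 1261*0^2 - 4200*0 - 2656 : ℤ) = -2656 by norm_num] at this
      exact (dvd_neg).mp this
    · have := hDk 1; rw [show (11*1 + c0 : ℤ) = 11 + c0 by ring] at this
      rw [show (11*1^4 + 6*1^3 - 1261*1^2 - 4200*1 - 2656 : ℤ) = -8100 by norm_num] at this
      exact (dvd_neg).mp this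
    · have := hDk (-1); rw [show (11*(-1) + c0 : ℤ) = -11 + c0 by ring] at this
      rw [show (11*(-1)^4 + 6*(-1)^3 - 1261*(-1)^2 - 4200*(-1) - 2656 : ℤ) = 288 by norm_num] at this
      exact this
    · have := hDk 2; rw [show (11*2 + c0 : ℤ) = 22 + c0 by ring] at this
      rw [show (11*2^4 + 6*2^3 - 1261*2^2 - 4200*2 - 2656 : ℤ) = -15876 by norm_num] at this
      exact (dvd_neg).mp this
    · have := hDk (-2); rw [show (11*(-2) + c0 : ℤ) = -22 + c0 by ring] at this
      rw [show (11*(-2)^4 + 6*(-2)^3 - 1261*(-2)^2 - 4200*(-2) - 2656 : ℤ) = 828 by norm_num] at this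
      exact this
    · have := hDk 3; rw [show (11*3 + c0 : ℤ) = 33 + c0 by ring] at this
      rw [show (11*3^4 + 6*3^3 - 1261*3^2 - 4200*3 - 2656 : ℤ) = -25552 by norm_num] at this
      exact (dvd_neg).mp this
    · have := hDk (-3); rw [show (11*(-3) + c0 : ℤ) = -33 + c0 by ring] at this
      rw [show (11*(-3)^4 + 6*(-3)^3 - 1261*(-3)^2 - 4200*(-3) - 2656 : ℤ) = -676 by norm_num] at this
      exact (dvd_neg).mp this
  · -- degree 4 : Cq constant = 11
    have hCdeg : Cq.natDegree = 0 := by omega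
    obtain ⟨c, hc⟩ := Polynomial.natDegree_eq_zero.mp hCdeg
    have hlc : c = 11 := by
      have h := hlcR
      rw [hfac, leadingCoeff_mul, hMmonic.leadingCoeff, one_mul, ← hc, leadingCoeff_C] at h
      exact h
    have hev0 : (-2656:ℤ) = aeval (0:ℤ) M * 11 := by
      have h := congrArg (aeval (0:ℤ)) hfac
      rw [hRval 0, ← hc, hlc] at h
      simpa using h
    omega


theorem stmt_18 :
    (∀ y : ℂ, (∃ n : ℕ, 0 < n ∧ y ^ n = 1) →
      25 * y ^ 8 + 998 * y ^ 6 + 1923 * y ^ 4 + 998 * y ^ 2 + 25 ≠ 0) ∧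
    (∀ y : ℂ, (∃ n : ℕ, 0 < n ∧ y ^ n = 1) →
      11 * y ^ 8 + 6 * y ^ 7 - 1217 * y ^ 6 - 4182 * y ^ 5 - 5112 * y ^ 4 -
        4182 * y ^ 3 - 1217 * y ^ 2 + 6 * y + 11 ≠ 0) := by
  exact ⟨part1, part2⟩
end
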